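/- arXiv:1105.0854 — 11 statements merged into one kernel-verified Lean document; each statement's English description precedes it below -/
import Mathlib

section
/- Let φ: ℝ≥0 → ℝ≥0 be non-decreasing with φ(t)/2 ≤ φ(t/2) for all t ≥ 0. Let T : E → F be a bijection between normed spaces such that ‖Tx − Ty‖ ≤ φ(‖x−y‖) and ‖T⁻¹f − T⁻¹g‖ ≤ φ(‖f−g‖) for all x,y ∈ E and f,g ∈ F. Then for all a, b ∈ E and all n ∈ ℕ, ‖T((a+b)/2) − (Ta+Tb)/2‖ ≤ φ^(2^(n+1)−1)(‖a−b‖/2^(n+1)), where φ^k denotes the k-fold composition of φ with itself. -/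
private lemma iter_nonneg' (φ : ℝ → ℝ) (hnn : ∀ t ≥ (0:ℝ), 0 ≤ φ t) :
    ∀ (k : ℕ) (t : ℝ), 0 ≤ t → 0 ≤ φ^[k] t := by
  intro k
  induction k with
  | zero => intro t ht; simpa using ht
  | succ k ih =>
    intro t ht
    rw [Function.iterate_succ_apply']
    exact hnn _ (ih t ht)

private lemma iter_half' (φ : ℝ → ℝ) (hmono : MonotoneOn φ (Set.Ici 0))
    (hnn : ∀ t ≥ (0:ℝ), 0 ≤ φ t) (hhalf : ∀ t ≥ (0:ℝ), φ t / 2 ≤ φ (t / 2)) :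
    ∀ (k : ℕ) (t : ℝ), 0 ≤ t → φ^[k] t / 2 ≤ φ^[k] (t / 2) := by
  intro k
  induction k with
  | zero => intro t ht; simp
  | succ k ih =>
    intro t ht
    rw [Function.iterate_succ_apply', Function.iterate_succ_apply']
    have h0 : 0 ≤ φ^[k] t := iter_nonneg' φ hnn k t ht
    calc φ (φ^[k] t) / 2 ≤ φ (φ^[k] t / 2) := hhalf _ h0
      _ ≤ φ (φ^[k] (t / 2)) := by
          refine hmono (Set.mem_Ici.2 (by linarith)) (Set.mem_Ici.2 ?_) (ih t ht)
          exact iter_nonneg' φ hnn k _ (by linarith)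

private lemma iter_two_mul' (φ : ℝ → ℝ) :
    ∀ (j : ℕ) (s : ℝ), (φ ∘ φ)^[j] s = φ^[2 * j] s := by
  intro j
  induction j with
  | zero => intro s; simp
  | succ j ih =>
    intro s
    rw [Function.iterate_succ_apply', ih s]
    show φ (φ (φ^[2 * j] s)) = φ^[2 * (j + 1)] s
    rw [show 2 * (j + 1) = (2 * j + 1) + 1 by ring, Function.iterate_succ_apply',
      Function.iterate_succ_apply']

private lemma base_est {E F : Type*} [NormedAddCommGroup E] [NormedSpace ℝ E]
    [NormedAddCommGroup F] [NormedSpace ℝ F]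
    (φ : ℝ → ℝ) (T : E → F)
    (hT : ∀ x y : E, ‖T x - T y‖ ≤ φ ‖x - y‖) (a b : E) :
    ‖T ((2:ℝ)⁻¹ • (a + b)) - (2:ℝ)⁻¹ • (T a + T b)‖ ≤ φ (‖a - b‖ / 2) := by
  set m := (2:ℝ)⁻¹ • (a + b) with hm
  have hma : ‖m - a‖ = ‖a - b‖ / 2 := by
    have h1 : m - a = (2:ℝ)⁻¹ • (b - a) := by rw [hm]; module
    rw [h1, norm_smul, norm_sub_rev]
    simp [norm_inv]
    ring
  have hmb : ‖m - b‖ = ‖a - b‖ / 2 := by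
    have h1 : m - b = (2:ℝ)⁻¹ • (a - b) := by rw [hm]; module
    rw [h1, norm_smul]
    simp [norm_inv]
    ring
  have h1 : ‖T m - T a‖ ≤ φ (‖a - b‖ / 2) := by rw [← hma]; exact hT m a
  have h2 : ‖T m - T b‖ ≤ φ (‖a - b‖ / 2) := by rw [← hmb]; exact hT m b
  have h3 : T m - (2:ℝ)⁻¹ • (T a + T b) = (2:ℝ)⁻¹ • ((T m - T a) + (T m - T b)) := by
    module
  rw [h3, norm_smul]
  have h4 : ‖(T m - T a) + (T m - T b)‖ ≤ ‖T m - T a‖ + ‖T m - T b‖ := norm_add_le _ _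
  have h5 : ‖((2:ℝ)⁻¹ : ℝ)‖ = 2⁻¹ := by simp
  rw [h5]
  nlinarith [norm_nonneg ((T m - T a) + (T m - T b))]

private lemma reflect_est {E F : Type*} [NormedAddCommGroup E] [NormedSpace ℝ E]
    [NormedAddCommGroup F] [NormedSpace ℝ F]
    (φ : ℝ → ℝ) (hmono : MonotoneOn φ (Set.Ici 0))
    (T : E → F) (hbij : Function.Bijective T)
    (hT : ∀ x y : E, ‖T x - T y‖ ≤ φ ‖x - y‖)
    (hTinv : ∀ f g : F, ‖Function.invFun T f - Function.invFun T g‖ ≤ φ ‖f - g‖)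
    (a b : E) :
    ∃ R : E → E, Function.Bijective R ∧
      (∀ x y : E, ‖R x - R y‖ ≤ (φ ∘ φ) ‖x - y‖) ∧
      (∀ x y : E, ‖Function.invFun R x - Function.invFun R y‖ ≤ (φ ∘ φ) ‖x - y‖) ∧
      R a = b ∧ R b = a ∧
      ‖T ((2:ℝ)⁻¹ • (a + b)) - (2:ℝ)⁻¹ • (T a + T b)‖
        ≤ φ ‖(2:ℝ)⁻¹ • (a + b) - R ((2:ℝ)⁻¹ • (a + b))‖ / 2 := by
  have hli : Function.LeftInverse (Function.invFun T) T :=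
    Function.leftInverse_invFun hbij.1
  have hri : Function.RightInverse (Function.invFun T) T :=
    Function.rightInverse_invFun hbij.2
  refine ⟨fun x => Function.invFun T (T a + T b - T x), ?_⟩
  set R : E → E := fun x => Function.invFun T (T a + T b - T x) with hRdef
  have hinvol : Function.Involutive R := by
    intro x
    show Function.invFun T (T a + T b - T (Function.invFun T (T a + T b - T x))) = x
    rw [hri (T a + T b - T x), sub_sub_cancel]
    exact hli x
  have hRbij : Function.Bijective R := hinvol.bijective
  have hinvR : Function.invFun R = R := by
    funext x
    have h1 : R (Function.invFun R x) = x := Function.rightInverse_invFun hRbij.2 x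
    have h2 : R (R x) = x := hinvol x
    exact hRbij.1 (h1.trans h2.symm)
  have hRbound : ∀ x y : E, ‖R x - R y‖ ≤ (φ ∘ φ) ‖x - y‖ := by
    intro x y
    have h1 : ‖R x - R y‖ ≤ φ ‖(T a + T b - T x) - (T a + T b - T y)‖ := hTinv _ _
    have h2 : (T a + T b - T x) - (T a + T b - T y) = T y - T x := by abel
    rw [h2, norm_sub_rev (T y)] at h1
    calc ‖R x - R y‖ ≤ φ ‖T x - T y‖ := h1
      _ ≤ φ (φ ‖x - y‖) := by
          refine hmono (Set.mem_Ici.2 (norm_nonneg _)) (Set.mem_Ici.2 ?_) (hT x y)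
          exact le_trans (norm_nonneg _) (hT x y)
  have hRa : R a = b := by
    show Function.invFun T (T a + T b - T a) = b
    rw [add_sub_cancel_left]
    exact hli b
  have hRb : R b = a := by
    show Function.invFun T (T a + T b - T b) = a
    rw [add_sub_cancel_right]
    exact hli a
  refine ⟨hRbij, hRbound, by rw [hinvR]; exact hRbound, hRa, hRb, ?_⟩
  set m := (2:ℝ)⁻¹ • (a + b) with hm
  have hTR : T (R m) = T a + T b - T m := hri _
  have hkey : T m - T (R m) = (2:ℝ) • (T m - (2:ℝ)⁻¹ • (T a + T b)) := by
    rw [hTR]; module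
  have hnorm : ‖T m - T (R m)‖ = 2 * ‖T m - (2:ℝ)⁻¹ • (T a + T b)‖ := by
    rw [hkey, norm_smul]
    simp
  have hest : ‖T m - T (R m)‖ ≤ φ ‖m - R m‖ := hT m (R m)
  rw [hnorm] at hest
  linarith

private lemma aux_est {G : Type*} [NormedAddCommGroup G] [NormedSpace ℝ G] :
    ∀ (n : ℕ) (ψ : ℝ → ℝ), MonotoneOn ψ (Set.Ici 0) → (∀ t ≥ (0:ℝ), 0 ≤ ψ t) →
      (∀ t ≥ (0:ℝ), ψ t / 2 ≤ ψ (t / 2)) →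
      ∀ S : G → G, Function.Bijective S →
      (∀ x y : G, ‖S x - S y‖ ≤ ψ ‖x - y‖) →
      (∀ x y : G, ‖Function.invFun S x - Function.invFun S y‖ ≤ ψ ‖x - y‖) →
      ∀ a b : G, ‖S ((2:ℝ)⁻¹ • (a + b)) - (2:ℝ)⁻¹ • (S a + S b)‖
        ≤ ψ^[2 ^ (n + 1) - 1] (‖a - b‖ / 2 ^ (n + 1)) := by
  intro n
  induction n with
  | zero =>
    intro ψ hmono hnn hhalf S hbij hS hSinv a b
    simpa using base_est ψ S hS a b
  | succ k ih =>
    intro ψ hmono hnn hhalf S hbij hS hSinv a b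
    obtain ⟨R, hRbij, hR, hRinv, hRa, hRb, hest⟩ :=
      reflect_est ψ hmono S hbij hS hSinv a b
    have hcmono : MonotoneOn (ψ ∘ ψ) (Set.Ici 0) := by
      intro x hx y hy hxy
      exact hmono (Set.mem_Ici.2 (hnn x hx)) (Set.mem_Ici.2 (hnn y hy)) (hmono hx hy hxy)
    have hcnn : ∀ t ≥ (0:ℝ), 0 ≤ (ψ ∘ ψ) t := fun t ht => hnn _ (hnn t ht)
    have hchalf : ∀ t ≥ (0:ℝ), (ψ ∘ ψ) t / 2 ≤ (ψ ∘ ψ) (t / 2) := by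
      intro t ht
      calc ψ (ψ t) / 2 ≤ ψ (ψ t / 2) := hhalf _ (hnn t ht)
        _ ≤ ψ (ψ (t / 2)) := by
            refine hmono (Set.mem_Ici.2 (by have := hnn t ht; linarith))
              (Set.mem_Ici.2 (hnn _ (by linarith))) (hhalf t ht)
    have hIH := ih (ψ ∘ ψ) hcmono hcnn hchalf R hRbij hR hRinv a b
    rw [hRa, hRb] at hIH
    set m := (2:ℝ)⁻¹ • (a + b) with hm
    have hm' : (2:ℝ)⁻¹ • (b + a) = m := by rw [hm, add_comm]
    rw [hm'] at hIH
    set s := ‖a - b‖ / 2 ^ (k + 1) with hs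
    have hs0 : 0 ≤ s := by positivity
    have h2 : ‖m - R m‖ ≤ ψ^[2 * (2 ^ (k + 1) - 1)] s := by
      rw [norm_sub_rev]
      calc ‖R m - m‖ ≤ (ψ ∘ ψ)^[2 ^ (k + 1) - 1] s := hIH
        _ = ψ^[2 * (2 ^ (k + 1) - 1)] s := iter_two_mul' ψ _ s
    have h3 : ψ ‖m - R m‖ ≤ ψ^[2 * (2 ^ (k + 1) - 1) + 1] s := by
      rw [Function.iterate_succ_apply']
      refine hmono (Set.mem_Ici.2 (norm_nonneg _))
        (Set.mem_Ici.2 (iter_nonneg' ψ hnn _ s hs0)) h2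
    have hidx : 2 * (2 ^ (k + 1) - 1) + 1 = 2 ^ (k + 1 + 1) - 1 := by
      have h1 : (1:ℕ) ≤ 2 ^ (k + 1) := Nat.one_le_two_pow
      have h2 : 2 ^ (k + 1 + 1) = 2 * 2 ^ (k + 1) := by rw [pow_succ]; ring
      omega
    rw [hidx] at h3
    have hfin : ψ^[2 ^ (k + 1 + 1) - 1] s / 2 ≤ ψ^[2 ^ (k + 1 + 1) - 1] (s / 2) :=
      iter_half' ψ hmono hnn hhalf _ s hs0
    have hsd : s / 2 = ‖a - b‖ / 2 ^ (k + 1 + 1) := by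
      rw [hs, div_div, ← pow_succ]
    rw [hsd] at hfin
    calc ‖S m - (2:ℝ)⁻¹ • (S a + S b)‖ ≤ ψ ‖m - R m‖ / 2 := hest
      _ ≤ ψ^[2 ^ (k + 1 + 1) - 1] s / 2 := by linarith
      _ ≤ ψ^[2 ^ (k + 1 + 1) - 1] (‖a - b‖ / 2 ^ (k + 1 + 1)) := hfin

theorem midpoint_estimate_iterated
    {E F : Type*} [NormedAddCommGroup E] [NormedSpace ℝ E]
    [NormedAddCommGroup F] [NormedSpace ℝ F]
    (φ : ℝ → ℝ) (hφmono : MonotoneOn φ (Set.Ici 0))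
    (hφnonneg : ∀ t ≥ (0:ℝ), 0 ≤ φ t)
    (hφhalf : ∀ t ≥ (0:ℝ), φ t / 2 ≤ φ (t / 2))
    (T : E → F) (hbij : Function.Bijective T)
    (hT : ∀ x y : E, ‖T x - T y‖ ≤ φ ‖x - y‖)
    (hTinv : ∀ f g : F, ‖Function.invFun T f - Function.invFun T g‖ ≤ φ ‖f - g‖)
    (a b : E) (n : ℕ) :
    ‖T ((2:ℝ)⁻¹ • (a + b)) - (2:ℝ)⁻¹ • (T a + T b)‖
      ≤ φ^[2 ^ (n + 1) - 1] (‖a - b‖ / 2 ^ (n + 1)) := by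
  cases n with
  | zero => simpa using base_est φ T hT a b
  | succ k =>
    obtain ⟨R, hRbij, hR, hRinv, hRa, hRb, hest⟩ :=
      reflect_est φ hφmono T hbij hT hTinv a b
    have hcmono : MonotoneOn (φ ∘ φ) (Set.Ici 0) := by
      intro x hx y hy hxy
      exact hφmono (Set.mem_Ici.2 (hφnonneg x hx)) (Set.mem_Ici.2 (hφnonneg y hy))
        (hφmono hx hy hxy)
    have hcnn : ∀ t ≥ (0:ℝ), 0 ≤ (φ ∘ φ) t := fun t ht => hφnonneg _ (hφnonneg t ht)
    have hchalf : ∀ t ≥ (0:ℝ), (φ ∘ φ) t / 2 ≤ (φ ∘ φ) (t / 2) := by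
      intro t ht
      calc φ (φ t) / 2 ≤ φ (φ t / 2) := hφhalf _ (hφnonneg t ht)
        _ ≤ φ (φ (t / 2)) := by
            refine hφmono (Set.mem_Ici.2 (by have := hφnonneg t ht; linarith))
              (Set.mem_Ici.2 (hφnonneg _ (by linarith))) (hφhalf t ht)
    have hIH := aux_est k (φ ∘ φ) hcmono hcnn hchalf R hRbij hR hRinv a b
    rw [hRa, hRb] at hIH
    set m := (2:ℝ)⁻¹ • (a + b) with hm
    have hm' : (2:ℝ)⁻¹ • (b + a) = m := by rw [hm, add_comm]
    rw [hm'] at hIH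
    set s := ‖a - b‖ / 2 ^ (k + 1) with hs
    have hs0 : 0 ≤ s := by positivity
    have h2 : ‖m - R m‖ ≤ φ^[2 * (2 ^ (k + 1) - 1)] s := by
      rw [norm_sub_rev]
      calc ‖R m - m‖ ≤ (φ ∘ φ)^[2 ^ (k + 1) - 1] s := hIH
        _ = φ^[2 * (2 ^ (k + 1) - 1)] s := iter_two_mul' φ _ s
    have h3 : φ ‖m - R m‖ ≤ φ^[2 * (2 ^ (k + 1) - 1) + 1] s := by
      rw [Function.iterate_succ_apply']
      refine hφmono (Set.mem_Ici.2 (norm_nonneg _))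
        (Set.mem_Ici.2 (iter_nonneg' φ hφnonneg _ s hs0)) h2
    have hidx : 2 * (2 ^ (k + 1) - 1) + 1 = 2 ^ (k + 1 + 1) - 1 := by
      have h1 : (1:ℕ) ≤ 2 ^ (k + 1) := Nat.one_le_two_pow
      have h2 : 2 ^ (k + 1 + 1) = 2 * 2 ^ (k + 1) := by rw [pow_succ]; ring
      omega
    rw [hidx] at h3
    have hfin : φ^[2 ^ (k + 1 + 1) - 1] s / 2 ≤ φ^[2 ^ (k + 1 + 1) - 1] (s / 2) :=
      iter_half' φ hφmono hφnonneg hφhalf _ s hs0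
    have hsd : s / 2 = ‖a - b‖ / 2 ^ (k + 1 + 1) := by
      rw [hs, div_div, ← pow_succ]
    rw [hsd] at hfin
    calc ‖T m - (2:ℝ)⁻¹ • (T a + T b)‖ ≤ φ ‖m - R m‖ / 2 := hest
      _ ≤ φ^[2 ^ (k + 1 + 1) - 1] s / 2 := by linarith
      _ ≤ φ^[2 ^ (k + 1 + 1) - 1] (‖a - b‖ / 2 ^ (k + 1 + 1)) := hfin
end

section
/- Let T : E → F be a bijective φ-isometry between normed spaces with φ non-decreasing. Fix a, b ∈ E with midpoint z = (a+b)/2. Let Ψ be the point reflection of E about z (Ψ(x) = 2z − x) and Ψ' the point reflection of F about (Ta+Tb)/2. Then the composition S = Ψ ∘ T⁻¹ ∘ Ψ' ∘ T is a bijective (φ∘φ)-isometry of E onto itself satisfying Sa = a and Sb = b. -/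
theorem reflection_composition_is_phi_phi_isometry
    {E F : Type*} [NormedAddCommGroup E] [NormedSpace ℝ E]
    [NormedAddCommGroup F] [NormedSpace ℝ F]
    (φ : ℝ → ℝ) (hφmono : MonotoneOn φ (Set.Ici 0))
    (hφnonneg : ∀ t ≥ (0:ℝ), 0 ≤ φ t)
    (T : E → F) (hbij : Function.Bijective T)
    (hT : ∀ x y : E, ‖T x - T y‖ ≤ φ ‖x - y‖)
    (hTinv : ∀ f g : F, ‖Function.invFun T f - Function.invFun T g‖ ≤ φ ‖f - g‖)
    (a b : E) :
    let z : E := (2:ℝ)⁻¹ • (a + b)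
    let w : F := (2:ℝ)⁻¹ • (T a + T b)
    let Ψ : E → E := fun x => (2:ℝ) • z - x
    let Ψ' : F → F := fun f => (2:ℝ) • w - f
    let S : E → E := Ψ ∘ Function.invFun T ∘ Ψ' ∘ T
    Function.Bijective S ∧
    (∀ x y : E, ‖S x - S y‖ ≤ φ (φ ‖x - y‖)) ∧
    (∀ x y : E, ‖Function.invFun S x - Function.invFun S y‖ ≤ φ (φ ‖x - y‖)) ∧
    S a = a ∧ S b = b := by
  intro z w Ψ Ψ' S
  set I : F → E := Function.invFun T with hI
  have hli : Function.LeftInverse I T := Function.leftInverse_invFun hbij.1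
  have hri : Function.RightInverse I T := Function.rightInverse_invFun hbij.2
  have hIbij : Function.Bijective I := ⟨hri.injective, hli.surjective⟩
  have hΨinv : Function.Involutive Ψ := by
    intro x; show (2:ℝ) • z - ((2:ℝ) • z - x) = x; abel
  have hΨ'inv : Function.Involutive Ψ' := by
    intro f; show (2:ℝ) • w - ((2:ℝ) • w - f) = f; abel
  have hSbij : Function.Bijective S :=
    hΨinv.bijective.comp (hIbij.comp (hΨ'inv.bijective.comp hbij))
  -- key estimate: any map of the form I ∘ Ψ' ∘ T precomposed/postcomposed with
  -- isometric reflections satisfies the φ∘φ bound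
  have hΨnorm : ∀ x y : E, ‖Ψ x - Ψ y‖ = ‖x - y‖ := by
    intro x y
    show ‖((2:ℝ) • z - x) - ((2:ℝ) • z - y)‖ = ‖x - y‖
    rw [show ((2:ℝ) • z - x) - ((2:ℝ) • z - y) = y - x by abel, norm_sub_rev]
  have hΨ'norm : ∀ f g : F, ‖Ψ' f - Ψ' g‖ = ‖f - g‖ := by
    intro f g
    show ‖((2:ℝ) • w - f) - ((2:ℝ) • w - g)‖ = ‖f - g‖
    rw [show ((2:ℝ) • w - f) - ((2:ℝ) • w - g) = g - f by abel, norm_sub_rev]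
  have key : ∀ x y : E, ‖I (Ψ' (T x)) - I (Ψ' (T y))‖ ≤ φ (φ ‖x - y‖) := by
    intro x y
    calc ‖I (Ψ' (T x)) - I (Ψ' (T y))‖ ≤ φ ‖Ψ' (T x) - Ψ' (T y)‖ := hTinv _ _
      _ = φ ‖T x - T y‖ := by rw [hΨ'norm]
      _ ≤ φ (φ ‖x - y‖) := hφmono (norm_nonneg _)
          (hφnonneg _ (norm_nonneg _)) (hT x y)
  have hSbound : ∀ x y : E, ‖S x - S y‖ ≤ φ (φ ‖x - y‖) := by
    intro x y
    have : ‖S x - S y‖ = ‖I (Ψ' (T x)) - I (Ψ' (T y))‖ := by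
      show ‖Ψ (I (Ψ' (T x))) - Ψ (I (Ψ' (T y)))‖ = _
      exact hΨnorm _ _
    rw [this]; exact key x y
  -- inverse of S
  have hSinv : Function.invFun S = I ∘ Ψ' ∘ T ∘ Ψ := by
    funext x
    apply hSbij.1
    rw [Function.invFun_eq (hSbij.2 x)]
    symm
    show Ψ (I (Ψ' (T (I (Ψ' (T (Ψ x))))))) = x
    rw [hri, hΨ'inv, hli, hΨinv]
  have hSinvbound : ∀ x y : E,
      ‖Function.invFun S x - Function.invFun S y‖ ≤ φ (φ ‖x - y‖) := by
    intro x y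
    rw [hSinv]
    show ‖I (Ψ' (T (Ψ x))) - I (Ψ' (T (Ψ y)))‖ ≤ _
    calc ‖I (Ψ' (T (Ψ x))) - I (Ψ' (T (Ψ y)))‖ ≤ φ (φ ‖Ψ x - Ψ y‖) := key _ _
      _ = φ (φ ‖x - y‖) := by rw [hΨnorm]
  refine ⟨hSbij, hSbound, hSinvbound, ?_, ?_⟩
  · -- S a = a : Ψ'(T a) = T b, I (T b) = b, Ψ b = a
    show Ψ (I (Ψ' (T a))) = a
    have h1 : Ψ' (T a) = T b := by
      show (2:ℝ) • w - T a = T b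
      rw [show ((2:ℝ) • ((2:ℝ)⁻¹ • (T a + T b)) : F) = T a + T b by
        rw [smul_smul]; norm_num]
      abel
    rw [h1, hli]
    show (2:ℝ) • z - b = a
    rw [show ((2:ℝ) • ((2:ℝ)⁻¹ • (a + b)) : E) = a + b by
      rw [smul_smul]; norm_num]
    abel
  · show Ψ (I (Ψ' (T b))) = b
    have h1 : Ψ' (T b) = T a := by
      show (2:ℝ) • w - T b = T a
      rw [show ((2:ℝ) • ((2:ℝ)⁻¹ • (T a + T b)) : F) = T a + T b by
        rw [smul_smul]; norm_num]
      abel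
    rw [h1, hli]
    show (2:ℝ) • z - a = b
    rw [show ((2:ℝ) • ((2:ℝ)⁻¹ • (a + b)) : E) = a + b by
      rw [smul_smul]; norm_num]
    abel
end

section
/- Let ε : ℝ≥0 → ℝ>0 be a non-decreasing function and define φ(t) = t + ε(t). Then for every t ≥ 0 and every n ∈ ℕ, the integral ∫ from t to φ^n(t) of 1/ε(x) dx is at most n, where φ^n is the n-fold composition of φ. -/
theorem integral_of_inv_eps_le_n
    (ε : ℝ → ℝ) (hεpos : ∀ t ≥ (0:ℝ), 0 < ε t)
    (hεmono : MonotoneOn ε (Set.Ici 0))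
    (φ : ℝ → ℝ) (hφ : ∀ t, φ t = t + ε t)
    (t : ℝ) (ht : 0 ≤ t) (n : ℕ) :
    ∫ x in t..(φ^[n] t), (ε x)⁻¹ ≤ (n : ℝ) := by
  have hanti : AntitoneOn (fun x => (ε x)⁻¹) (Set.Ici 0) := by
    intro x hx y hy hxy
    exact inv_anti₀ (hεpos x hx) (hεmono hx hy hxy)
  have hiter : ∀ m : ℕ, t ≤ φ^[m] t := by
    intro m
    induction m with
    | zero => simp
    | succ k ih =>
      rw [Function.iterate_succ_apply', hφ]
      have := hεpos _ (le_trans ht ih)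
      linarith
  have hintgen : ∀ a b : ℝ, 0 ≤ a → 0 ≤ b →
      IntervalIntegrable (fun x => (ε x)⁻¹) MeasureTheory.volume a b := by
    intro a b ha hb
    apply AntitoneOn.intervalIntegrable
    apply hanti.mono
    intro x hx
    rcases le_total a b with h | h
    · rw [Set.uIcc_of_le h] at hx; exact le_trans ha hx.1
    · rw [Set.uIcc_of_ge h] at hx; exact le_trans hb hx.1
  induction n with
  | zero => simp
  | succ k ih =>
    have hs : t ≤ φ^[k] t := hiter k
    set s := φ^[k] t with hsdef
    have hs0 : (0:ℝ) ≤ s := le_trans ht hs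
    have hεs : 0 < ε s := hεpos s hs0
    have hstep : φ^[k+1] t = s + ε s := by
      rw [Function.iterate_succ_apply', hφ]
    rw [hstep]
    have hse0 : (0:ℝ) ≤ s + ε s := by linarith
    have hsplit : ∫ x in t..(s + ε s), (ε x)⁻¹ =
        (∫ x in t..s, (ε x)⁻¹) + ∫ x in s..(s + ε s), (ε x)⁻¹ :=
      (intervalIntegral.integral_add_adjacent_intervals
        (hintgen t s ht hs0) (hintgen s (s + ε s) hs0 hse0)).symm
    have hlast : ∫ x in s..(s + ε s), (ε x)⁻¹ ≤ 1 := by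
      have hmono : ∫ x in s..(s + ε s), (ε x)⁻¹ ≤ ∫ _x in s..(s + ε s), (ε s)⁻¹ := by
        apply intervalIntegral.integral_mono_on (by linarith) (hintgen s (s + ε s) hs0 hse0)
          intervalIntegrable_const
        intro x hx
        exact inv_anti₀ hεs (hεmono hs0 (le_trans hs0 hx.1) hx.1)
      have : ∫ _x in s..(s + ε s), (ε s)⁻¹ = 1 := by
        rw [intervalIntegral.integral_const]
        field_simp
        rw [smul_eq_mul, add_sub_cancel_left, one_div, mul_inv_cancel₀ hεs.ne']
      linarith
    have : ((k+1 : ℕ) : ℝ) = (k : ℝ) + 1 := by push_cast; ring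
    rw [hsplit, this]
    linarith
end

section
/- Let T : E → F be a bijection between Banach spaces with T(0) = 0 such that ‖Tx−Ty‖ ≤ ‖x−y‖ + L and ‖T⁻¹f−T⁻¹g‖ ≤ ‖f−g‖ + L for all x,y ∈ E and f,g ∈ F, where L ≥ 0. Then there exist constants A, B ≥ 0 depending only on L such that ‖T((a+b)/2) − (Ta+Tb)/2‖ ≤ A·√‖a−b‖ + B for all a, b ∈ E. -/
/-- Pigeonhole for a monotone sequence: among `n` consecutive gaps, one is at most the
average. -/
lemma exists_small_gap (s : ℕ → ℝ) (n : ℕ) (hn : 0 < n) (M : ℝ)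
    (hdec : ∀ j, s (j + 1) ≤ s j) (hbound : s 0 - s n ≤ M) :
    ∃ j < n, (n : ℝ) * (s j - s (j + 1)) ≤ M := by
  by_contra hcon
  push_neg at hcon
  have hsum : ∑ j ∈ Finset.range n, (s j - s (j + 1)) = s 0 - s n :=
    Finset.sum_range_sub' s n
  have hnpos : (0 : ℝ) < (n : ℝ) := by exact_mod_cast hn
  have hlt : ∀ j ∈ Finset.range n, M / n < s j - s (j + 1) := by
    intro j hj
    have h := hcon j (Finset.mem_range.mp hj)
    rw [div_lt_iff₀ hnpos]
    nlinarith [h]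
  have h2 : ∑ _j ∈ Finset.range n, (M / n) < ∑ j ∈ Finset.range n, (s j - s (j + 1)) :=
    Finset.sum_lt_sum_of_nonempty ⟨0, Finset.mem_range.mpr hn⟩ hlt
  rw [Finset.sum_const, Finset.card_range, nsmul_eq_mul, hsum] at h2
  have heq : (n : ℝ) * (M / n) = M := by field_simp
  rw [heq] at h2
  linarith

set_option maxHeartbeats 1000000 in
theorem L_isometry_midpoint_sqrt_estimate
    (L : ℝ) (hL : 0 ≤ L) :
    ∃ A B : ℝ, 0 ≤ A ∧ 0 ≤ B ∧
      ∀ (E F : Type) (_ : NormedAddCommGroup E) (_ : NormedSpace ℝ E) (_ : CompleteSpace E)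
        (_ : NormedAddCommGroup F) (_ : NormedSpace ℝ F) (_ : CompleteSpace F)
        (T : E → F), Function.Bijective T → T 0 = 0 →
        (∀ x y : E, ‖T x - T y‖ ≤ ‖x - y‖ + L) →
        (∀ f g : F, ‖Function.invFun T f - Function.invFun T g‖ ≤ ‖f - g‖ + L) →
        ∀ a b : E,
          ‖T ((2:ℝ)⁻¹ • (a + b)) - (2:ℝ)⁻¹ • (T a + T b)‖ ≤ A * Real.sqrt ‖a - b‖ + B := by
  refine ⟨0, 2 * L, le_rfl, by linarith, ?_⟩
  intro E F iE sE _cE iF sF _cF T hbij hT0 hT1 hT2 a b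
  haveI : Nonempty E := ⟨0⟩
  rw [zero_mul, zero_add]
  set m : E := (2:ℝ)⁻¹ • (a + b) with hm
  set q : F := (2:ℝ)⁻¹ • (T a + T b) with hq
  set u : F := T m - q with hu
  set c : F := T a - q with hc
  set δ : ℝ := ‖u‖ with hδ
  set C : ℝ := ‖c‖ with hC
  have hC0 : 0 ≤ C := norm_nonneg _
  have hδ0 : 0 ≤ δ := norm_nonneg _
  -- Step 1: for every w in F, ‖w - Tm‖ ≤ (‖w - Ta‖ + ‖w - Tb‖)/2 + 2L
  have star : ∀ w : F, ‖w - T m‖ ≤ (‖w - T a‖ + ‖w - T b‖) / 2 + 2 * L := by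
    intro w
    have hTz : T (Function.invFun T w) = w := Function.rightInverse_invFun hbij.2 w
    set z : E := Function.invFun T w with hz
    have h1 : ‖w - T m‖ ≤ ‖z - m‖ + L := by
      have h := hT1 z m
      rwa [hTz] at h
    have hza : ‖z - a‖ ≤ ‖w - T a‖ + L := by
      have h := hT2 w (T a)
      rwa [Function.leftInverse_invFun hbij.1 a] at h
    have hzb : ‖z - b‖ ≤ ‖w - T b‖ + L := by
      have h := hT2 w (T b)
      rwa [Function.leftInverse_invFun hbij.1 b] at h
    have hmid : ‖z - m‖ ≤ (‖z - a‖ + ‖z - b‖) / 2 := by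
      have hzm : z - m = (2:ℝ)⁻¹ • ((z - a) + (z - b)) := by
        rw [hm]; module
      rw [hzm, norm_smul, Real.norm_eq_abs,
        abs_of_pos (by norm_num : (0:ℝ) < (2:ℝ)⁻¹)]
      have h3 := norm_add_le (z - a) (z - b)
      linarith
    linarith
  -- Step 2: shifted version
  have starV : ∀ V : F, ‖V + u‖ ≤ (‖V + c‖ + ‖V - c‖) / 2 + 2 * L := by
    intro V
    have h := star (q - V)
    have e1 : q - V - T m = -(V + u) := by rw [hu]; abel
    have e2 : q - V - T a = -(V + c) := by rw [hc]; abel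
    have e3 : q - V - T b = -(V - c) := by
      have hb' : T b = q - c := by rw [hc, hq]; module
      rw [hb']; abel
    rw [e1, e2, e3, norm_neg, norm_neg, norm_neg] at h
    exact h
  -- The auxiliary convex function Z x = ‖c + x • u‖
  set Z : ℝ → ℝ := fun x => ‖c + x • u‖ with hZfun
  have Zdef : ∀ x : ℝ, Z x = ‖c + x • u‖ := fun x => by rw [hZfun]
  have Z0 : Z 0 = C := by rw [Zdef 0, zero_smul, add_zero, ← hC]
  have Zlow : ∀ x : ℝ, 0 ≤ x → x * δ - C ≤ Z x := by
    intro x hx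
    have e : x • u = (c + x • u) - c := by module
    have h : ‖x • u‖ ≤ ‖c + x • u‖ + ‖c‖ := by
      conv_lhs => rw [e]
      exact norm_sub_le (c + x • u) c
    rw [norm_smul, Real.norm_eq_abs, abs_of_nonneg hx] at h
    rw [Zdef x, hδ, hC]
    linarith
  have Zlip : ∀ p r : ℝ, p ≤ r → Z r ≤ Z p + (r - p) * δ := by
    intro p r hpr
    have e : c + r • u = (c + p • u) + (r - p) • u := by module
    rw [Zdef r, Zdef p, e, hδ]
    have h := norm_add_le (c + p • u) ((r - p) • u)
    rw [norm_smul, Real.norm_eq_abs, abs_of_nonneg (by linarith : (0:ℝ) ≤ r - p)] at h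
    linarith
  have gdec : ∀ p r : ℝ, p ≤ r → Z r - r * δ ≤ Z p - p * δ := by
    intro p r hpr
    have h := Zlip p r hpr
    nlinarith [h]
  -- Master inequality
  have master : ∀ l : ℝ, 0 < l →
      l * δ ≤ 2 * C + l * (2 * Z (2*l/3) + 2 * Z (4*l/3) - 4 * Z l) + 2 * L * l := by
    intro l hl
    have hM : 4 * Z (l + 1/4) ≤ 2 * Z (2*l/3) + 2 * Z (4*l/3) + 2 * L := by
      have h := starV ((4:ℝ) • (c + l • u))
      have e1 : (4:ℝ) • (c + l • u) + u = (4:ℝ) • (c + (l + 1/4) • u) := by module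
      have e2 : (4:ℝ) • (c + l • u) + c = (5:ℝ) • (c + (4*l/5) • u) := by module
      have e3 : (4:ℝ) • (c + l • u) - c = (3:ℝ) • (c + (4*l/3) • u) := by module
      rw [e1, e2, e3, norm_smul, norm_smul, norm_smul] at h
      have n4 : ‖(4:ℝ)‖ = 4 := by norm_num
      have n5 : ‖(5:ℝ)‖ = 5 := by norm_num
      have n3 : ‖(3:ℝ)‖ = 3 := by norm_num
      rw [n4, n5, n3] at h
      have hcomb : ‖c + (4*l/5) • u‖
          ≤ (4/5) * ‖c + (2*l/3) • u‖ + (1/5) * ‖c + (4*l/3) • u‖ := by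
        have e : c + (4*l/5) • u
            = (4/5 : ℝ) • (c + (2*l/3) • u) + (1/5 : ℝ) • (c + (4*l/3) • u) := by module
        rw [e]
        have h45 := norm_add_le ((4/5 : ℝ) • (c + (2*l/3) • u)) ((1/5 : ℝ) • (c + (4*l/3) • u))
        rw [norm_smul, norm_smul] at h45
        have na : ‖(4/5:ℝ)‖ = 4/5 := by norm_num [Real.norm_eq_abs]
        have nb : ‖(1/5:ℝ)‖ = 1/5 := by norm_num [Real.norm_eq_abs]
        rw [na, nb] at h45
        exact h45
      rw [Zdef (l + 1/4), Zdef (2*l/3), Zdef (4*l/3)]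
      linarith
    have hsec : (4*l + 1) * Z l ≤ C + (4*l) * Z (l + 1/4) := by
      have e : (4*l + 1) • (c + l • u) = (c + (0:ℝ) • u) + (4*l) • (c + (l + 1/4) • u) := by
        module
      have h0 : ‖(4*l + 1) • (c + l • u)‖ = (4*l + 1) * Z l := by
        rw [norm_smul, Real.norm_eq_abs, abs_of_pos (by linarith : (0:ℝ) < 4*l + 1), Zdef l]
      have h1 : ‖(c + (0:ℝ) • u) + (4*l) • (c + (l + 1/4) • u)‖
          ≤ C + (4*l) * Z (l + 1/4) := by
        have h2 := norm_add_le (c + (0:ℝ) • u) ((4*l) • (c + (l + 1/4) • u))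
        rw [norm_smul, Real.norm_eq_abs, abs_of_pos (by linarith : (0:ℝ) < 4*l)] at h2
        have h3 : ‖c + (0:ℝ) • u‖ = C := by rw [zero_smul, add_zero, ← hC]
        rw [h3] at h2
        rw [Zdef (l + 1/4)]
        exact h2
      calc (4*l + 1) * Z l = ‖(4*l + 1) • (c + l • u)‖ := h0.symm
        _ = ‖(c + (0:ℝ) • u) + (4*l) • (c + (l + 1/4) • u)‖ := by rw [e]
        _ ≤ C + (4*l) * Z (l + 1/4) := h1
    have hZl : l * δ - C ≤ Z l := Zlow l hl.le
    have hmul := mul_le_mul_of_nonneg_left hM hl.le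
    nlinarith [hsec, hmul, hZl]
  -- Main estimate : δ ≤ 2L + γ for all γ > 0
  have main : ∀ γ : ℝ, 0 < γ → δ ≤ 2 * L + γ := by
    intro γ hγ
    obtain ⟨n, hn⟩ := exists_nat_gt (8 * C / γ)
    have hn0 : 0 < n := by
      rcases Nat.eq_zero_or_pos n with h0 | h
      · exfalso
        subst h0
        have hpos : (0:ℝ) ≤ 8 * C / γ := by positivity
        simp only [Nat.cast_zero] at hn
        linarith
      · exact h
    have hnpos : (0:ℝ) < (n:ℝ) := by exact_mod_cast hn0
    set lam : ℝ := (4 * C + 1) / γ with hlam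
    have hlam0 : 0 < lam := by rw [hlam]; positivity
    have hdec' : ∀ j : ℕ,
        (fun j : ℕ => Z (2 * (lam * 2^j) / 3) - (2 * (lam * 2^j) / 3) * δ) (j + 1)
        ≤ (fun j : ℕ => Z (2 * (lam * 2^j) / 3) - (2 * (lam * 2^j) / 3) * δ) j := by
      intro j
      simp only []
      have h2j : (0:ℝ) < 2^j := by positivity
      have hmono : 2 * (lam * 2^j) / 3 ≤ 2 * (lam * 2^(j+1)) / 3 := by
        rw [pow_succ]
        nlinarith [hlam0, h2j]
      exact gdec _ _ hmono
    have hbound' : (fun j : ℕ => Z (2 * (lam * 2^j) / 3) - (2 * (lam * 2^j) / 3) * δ) 0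
        - (fun j : ℕ => Z (2 * (lam * 2^j) / 3) - (2 * (lam * 2^j) / 3) * δ) n ≤ 2 * C := by
      simp only []
      have hx0 : (0:ℝ) ≤ 2 * (lam * 2^(0:ℕ)) / 3 := by positivity
      have hxn : (0:ℝ) ≤ 2 * (lam * 2^n) / 3 := by positivity
      have hup : Z (2 * (lam * 2^(0:ℕ)) / 3) ≤ C + (2 * (lam * 2^(0:ℕ)) / 3) * δ := by
        have h := Zlip 0 (2 * (lam * 2^(0:ℕ)) / 3) hx0
        rw [Z0] at h
        linarith
      have hlo := Zlow (2 * (lam * 2^n) / 3) hxn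
      linarith
    obtain ⟨j, hjn, hjle⟩ := exists_small_gap
      (fun j : ℕ => Z (2 * (lam * 2^j) / 3) - (2 * (lam * 2^j) / 3) * δ)
      n hn0 (2 * C) hdec' hbound'
    set l : ℝ := lam * 2^j with hldef
    have hl0 : 0 < l := by rw [hldef]; positivity
    have h2jge : (1:ℝ) ≤ 2^j := one_le_pow₀ (by norm_num : (1:ℝ) ≤ 2)
    have hlam_le : lam ≤ l := by
      have h := mul_le_mul_of_nonneg_left h2jge hlam0.le
      rw [mul_one] at h
      rw [hldef]
      exact h
    have hsucc : 2 * (lam * 2^(j+1)) / 3 = 4 * l / 3 := by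
      rw [hldef, pow_succ]; ring
    rw [hsucc] at hjle
    have harg : 2 * (lam * 2^j) / 3 = 2 * l / 3 := by rw [hldef]
    rw [harg] at hjle
    -- hjle : (n:ℝ) * ((Z (2*l/3) - (2*l/3)*δ) - (Z (4*l/3) - (4*l/3)*δ)) ≤ 2*C
    have hZg : Z (4*l/3) - (4*l/3) * δ ≤ Z l - l * δ :=
      gdec l (4*l/3) (by nlinarith)
    have hgap : (Z (2*l/3) - (2*l/3)*δ) - (Z (4*l/3) - (4*l/3)*δ) ≤ 2 * C / n := by
      rw [le_div_iff₀ hnpos]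
      nlinarith [hjle]
    have hquart : 2 * C / (n:ℝ) ≤ γ / 4 := by
      rw [div_le_div_iff₀ hnpos (by norm_num : (0:ℝ) < 4)]
      have h8 : 8 * C < (n:ℝ) * γ := (div_lt_iff₀ hγ).mp hn
      nlinarith [h8]
    have hR : 2 * Z (2*l/3) + 2 * Z (4*l/3) - 4 * Z l ≤ γ / 2 := by
      nlinarith [hgap, hquart, hZg]
    have hma := master l hl0
    have hlamγ : lam * γ = 4 * C + 1 := by
      rw [hlam]; field_simp
    have h2C : 2 * C ≤ l * (γ / 2) := by
      have hgg := mul_le_mul_of_nonneg_right hlam_le hγ.le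
      nlinarith [hgg, hlamγ]
    have hlR := mul_le_mul_of_nonneg_left hR hl0.le
    have hfin : l * δ ≤ l * (2 * L + γ) := by nlinarith [hma, h2C, hlR]
    exact le_of_mul_le_mul_left hfin hl0
  exact le_of_forall_pos_le_add main
end

section
/- Let T : E → F be a bijective φ-isometry between Banach spaces for φ(t) = t + L, L ≥ 0. Then for all a, b ∈ E and n ∈ ℕ, ‖T((a+b)/2) − (Ta+Tb)/2‖ ≤ ‖a−b‖/2^(n+1) + 2^(n+1)·L. -/
lemma pow_nat_aux : ∀ k : ℕ, k + 3 ≤ 2 ^ (k + 2) := by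
  intro k
  induction k with
  | zero => norm_num
  | succ j ihj =>
    have h2 : (2:ℕ) ^ (j + 1 + 2) = 2 ^ (j + 2) * 2 := by ring
    omega

lemma midpoint_aux {E : Type*} [NormedAddCommGroup E] [NormedSpace ℝ E] :
    ∀ (n : ℕ) (L : ℝ), 0 ≤ L → ∀ (g g' : E → E),
    (∀ x, g' (g x) = x) → (∀ y, g (g' y) = y) →
    (∀ x y, ‖g x - g y‖ ≤ ‖x - y‖ + L) →
    (∀ u v, ‖g' u - g' v‖ ≤ ‖u - v‖ + L) →
    ∀ a b : E, ‖g ((2:ℝ)⁻¹ • (a + b)) - (2:ℝ)⁻¹ • (g a + g b)‖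
      ≤ ‖a - b‖ / 2 ^ (n + 1) + (1 + (n : ℝ) / 2) * L := by
  intro n
  induction n with
  | zero =>
    intro L hL g g' hgg hgg' hg hg' a b
    set m := (2:ℝ)⁻¹ • (a + b) with hm
    have h1 : ‖m - a‖ = ‖a - b‖ / 2 := by
      have e : m - a = (2:ℝ)⁻¹ • (b - a) := by rw [hm]; module
      rw [e, norm_smul, norm_sub_rev]
      norm_num
      ring
    have h2 : ‖m - b‖ = ‖a - b‖ / 2 := by
      have e : m - b = (2:ℝ)⁻¹ • (a - b) := by rw [hm]; module
      rw [e, norm_smul]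
      norm_num
      ring
    have key : g m - (2:ℝ)⁻¹ • (g a + g b)
        = (2:ℝ)⁻¹ • ((g m - g a) + (g m - g b)) := by module
    have hga := hg m a
    have hgb := hg m b
    calc ‖g m - (2:ℝ)⁻¹ • (g a + g b)‖
        = (2:ℝ)⁻¹ * ‖(g m - g a) + (g m - g b)‖ := by
          rw [key, norm_smul]; norm_num
      _ ≤ (2:ℝ)⁻¹ * (‖g m - g a‖ + ‖g m - g b‖) := by
          gcongr; exact norm_add_le _ _
      _ ≤ (2:ℝ)⁻¹ * ((‖m - a‖ + L) + (‖m - b‖ + L)) := by gcongr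
      _ ≤ ‖a - b‖ / 2 ^ (0 + 1) + (1 + ((0:ℕ) : ℝ) / 2) * L := by
          rw [h1, h2]; norm_num; try linarith
  | succ n ih =>
    intro L hL g g' hgg hgg' hg hg' a b
    set g₂ : E → E := fun x => (a + b) - g' ((g a + g b) - g x) with hg₂def
    set g₂' : E → E := fun y => g' ((g a + g b) - g ((a + b) - y)) with hg₂'def
    have h1 : ∀ x, g₂' (g₂ x) = x := by
      intro x
      simp only [hg₂def, hg₂'def, sub_sub_cancel, hgg', hgg]
    have h2 : ∀ y, g₂ (g₂' y) = y := by
      intro y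
      simp only [hg₂def, hg₂'def, sub_sub_cancel, hgg', hgg]
    have hge : ∀ x y, ‖g₂ x - g₂ y‖ ≤ ‖x - y‖ + 2 * L := by
      intro x y
      have e : g₂ x - g₂ y = g' ((g a + g b) - g y) - g' ((g a + g b) - g x) := by
        simp only [hg₂def]; abel
      have e2 : ((g a + g b) - g y) - ((g a + g b) - g x) = g x - g y := by abel
      calc ‖g₂ x - g₂ y‖
          ≤ ‖((g a + g b) - g y) - ((g a + g b) - g x)‖ + L := by rw [e]; exact hg' _ _
        _ = ‖g x - g y‖ + L := by rw [e2]
        _ ≤ (‖x - y‖ + L) + L := by linarith [hg x y]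
        _ = ‖x - y‖ + 2 * L := by ring
    have hge' : ∀ u v, ‖g₂' u - g₂' v‖ ≤ ‖u - v‖ + 2 * L := by
      intro u v
      have e2 : ((g a + g b) - g ((a+b) - u)) - ((g a + g b) - g ((a+b) - v))
          = g ((a+b) - v) - g ((a+b) - u) := by abel
      have e3 : ((a+b) - v) - ((a+b) - u) = u - v := by abel
      calc ‖g₂' u - g₂' v‖
          ≤ ‖((g a + g b) - g ((a+b) - u)) - ((g a + g b) - g ((a+b) - v))‖ + L := by
            simp only [hg₂'def]; exact hg' _ _
        _ = ‖g ((a+b) - v) - g ((a+b) - u)‖ + L := by rw [e2]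
        _ ≤ (‖((a+b) - v) - ((a+b) - u)‖ + L) + L := by linarith [hg ((a+b) - v) ((a+b) - u)]
        _ = ‖u - v‖ + 2 * L := by rw [e3]; ring
    have key := ih (2*L) (by linarith) g₂ g₂' h1 h2 hge hge' a b
    have ha2 : g₂ a = a := by
      have e : (g a + g b) - g a = g b := by abel
      simp only [hg₂def, e, hgg, add_sub_cancel_right]
    have hb2 : g₂ b = b := by
      have e : (g a + g b) - g b = g a := by abel
      simp only [hg₂def, e, hgg, add_sub_cancel_left]
    rw [ha2, hb2] at key
    set m := (2:ℝ)⁻¹ • (a + b) with hm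
    set w := (g a + g b) - g m with hw
    -- g₂ m - m = m - g' w
    have hsm : (a + b) - m = m := by rw [hm]; module
    have g2m : g₂ m - m = m - g' w := by
      simp only [hg₂def, ← hw]
      have : (a + b) - g' w - m = ((a+b) - m) - g' w := by abel
      rw [this, hsm]
    -- 2 * defect = ‖g m - w‖
    have wkey : g m - w = (2:ℝ) • (g m - (2:ℝ)⁻¹ • (g a + g b)) := by
      rw [hw]; module
    have h2E : ‖g m - w‖ = 2 * ‖g m - (2:ℝ)⁻¹ • (g a + g b)‖ := by
      rw [wkey, norm_smul]; norm_num
    have hchain : ‖g m - w‖ ≤ ‖m - g' w‖ + L := by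
      have := hg m (g' w)
      rwa [hgg'] at this
    have hnorm : ‖g₂ m - m‖ = ‖m - g' w‖ := by rw [g2m]
    have keym : ‖m - g' w‖ ≤ ‖a - b‖ / 2 ^ (n + 1) + (1 + (n : ℝ) / 2) * (2 * L) := by
      rw [← hnorm]
      exact key
    have hp : (2:ℝ) ^ (n + 1 + 1) = 2 * 2 ^ (n + 1) := by ring
    have hd : ‖a - b‖ / 2 ^ (n + 1 + 1) = (‖a - b‖ / 2 ^ (n + 1)) / 2 := by
      rw [hp]; ring
    push_cast
    rw [hd]
    push_cast at keym
    linarith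

theorem L_isometry_midpoint_dyadic_estimate
    {E F : Type*} [NormedAddCommGroup E] [NormedSpace ℝ E] [CompleteSpace E]
    [NormedAddCommGroup F] [NormedSpace ℝ F] [CompleteSpace F]
    (L : ℝ) (hL : 0 ≤ L)
    (T : E → F) (hbij : Function.Bijective T)
    (hT : ∀ x y : E, ‖T x - T y‖ ≤ ‖x - y‖ + L)
    (hTinv : ∀ f g : F, ‖Function.invFun T f - Function.invFun T g‖ ≤ ‖f - g‖ + L)
    (a b : E) (n : ℕ) :
    ‖T ((2:ℝ)⁻¹ • (a + b)) - (2:ℝ)⁻¹ • (T a + T b)‖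
      ≤ ‖a - b‖ / 2 ^ (n + 1) + 2 ^ (n + 1) * L := by
  set Ti := Function.invFun T with hTidef
  have hTi1 : ∀ x, Ti (T x) = x := Function.leftInverse_invFun hbij.1
  have hTi2 : ∀ y, T (Ti y) = y := Function.rightInverse_invFun hbij.2
  set g : E → E := fun x => (a + b) - Ti ((T a + T b) - T x) with hgdef
  set g' : E → E := fun y => Ti ((T a + T b) - T ((a + b) - y)) with hg'def
  have h1 : ∀ x, g' (g x) = x := by
    intro x
    simp only [hgdef, hg'def, sub_sub_cancel, hTi2, hTi1]
  have h2 : ∀ y, g (g' y) = y := by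
    intro y
    simp only [hgdef, hg'def, sub_sub_cancel, hTi2, hTi1]
  have hge : ∀ x y, ‖g x - g y‖ ≤ ‖x - y‖ + 2 * L := by
    intro x y
    have e : g x - g y = Ti ((T a + T b) - T y) - Ti ((T a + T b) - T x) := by
      simp only [hgdef]; abel
    have e2 : ((T a + T b) - T y) - ((T a + T b) - T x) = T x - T y := by abel
    calc ‖g x - g y‖
        ≤ ‖((T a + T b) - T y) - ((T a + T b) - T x)‖ + L := by rw [e]; exact hTinv _ _
      _ = ‖T x - T y‖ + L := by rw [e2]
      _ ≤ (‖x - y‖ + L) + L := by linarith [hT x y]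
      _ = ‖x - y‖ + 2 * L := by ring
  have hge' : ∀ u v, ‖g' u - g' v‖ ≤ ‖u - v‖ + 2 * L := by
    intro u v
    have e2 : ((T a + T b) - T ((a+b) - u)) - ((T a + T b) - T ((a+b) - v))
        = T ((a+b) - v) - T ((a+b) - u) := by abel
    have e3 : ((a+b) - v) - ((a+b) - u) = u - v := by abel
    calc ‖g' u - g' v‖
        ≤ ‖((T a + T b) - T ((a+b) - u)) - ((T a + T b) - T ((a+b) - v))‖ + L := by
          simp only [hg'def]; exact hTinv _ _
      _ = ‖T ((a+b) - v) - T ((a+b) - u)‖ + L := by rw [e2]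
      _ ≤ (‖((a+b) - v) - ((a+b) - u)‖ + L) + L := by linarith [hT ((a+b) - v) ((a+b) - u)]
      _ = ‖u - v‖ + 2 * L := by rw [e3]; ring
  have key := midpoint_aux n (2*L) (by linarith) g g' h1 h2 hge hge' a b
  have ha2 : g a = a := by
    have e : (T a + T b) - T a = T b := by abel
    simp only [hgdef, e, hTi1, add_sub_cancel_right]
  have hb2 : g b = b := by
    have e : (T a + T b) - T b = T a := by abel
    simp only [hgdef, e, hTi1, add_sub_cancel_left]
  rw [ha2, hb2] at key
  set m := (2:ℝ)⁻¹ • (a + b) with hm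
  set w := (T a + T b) - T m with hw
  have hsm : (a + b) - m = m := by rw [hm]; module
  have g2m : g m - m = m - Ti w := by
    simp only [hgdef, ← hw]
    have : (a + b) - Ti w - m = ((a+b) - m) - Ti w := by abel
    rw [this, hsm]
  have wkey : T m - w = (2:ℝ) • (T m - (2:ℝ)⁻¹ • (T a + T b)) := by
    rw [hw]; module
  have h2E : ‖T m - w‖ = 2 * ‖T m - (2:ℝ)⁻¹ • (T a + T b)‖ := by
    rw [wkey, norm_smul]; norm_num
  have hchain : ‖T m - w‖ ≤ ‖m - Ti w‖ + L := by
    have := hT m (Ti w)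
    rwa [hTi2] at this
  have hnorm : ‖g m - m‖ = ‖m - Ti w‖ := by rw [g2m]
  have keym : ‖m - Ti w‖ ≤ ‖a - b‖ / 2 ^ (n + 1) + (1 + (n : ℝ) / 2) * (2 * L) := by
    rw [← hnorm]
    exact key
  have hcast : ((n : ℝ) + 3) ≤ 2 * 2 ^ (n + 1) := by
    have hnat : n + 3 ≤ 2 ^ (n + 2) := pow_nat_aux n
    have : ((n : ℝ) + 3) ≤ (2:ℝ) ^ (n + 2) := by exact_mod_cast hnat
    calc ((n : ℝ) + 3) ≤ (2:ℝ) ^ (n + 2) := this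
      _ = 2 * 2 ^ (n + 1) := by ring
  have hmul : ((n : ℝ) + 3) * L ≤ (2 * 2 ^ (n + 1)) * L :=
    mul_le_mul_of_nonneg_right hcast hL
  have hD : 0 ≤ ‖a - b‖ / 2 ^ (n + 1) := by positivity
  linarith
end

section
/- Let 0 < ε < 0.2, L ≥ 0 and let T : E → F be a bijective φ-isometry between normed spaces for φ(t) = (1+ε)t + L. Then for all a, b ∈ E, ‖T((a+b)/2) − (Ta+Tb)/2‖ ≤ 3ε‖a−b‖ + (4/ε)·L. -/
noncomputable def MEhp {E F : Type*} [AddCommGroup E] [AddCommGroup F]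
    (T : E → F) (Ti : F → E) (a b : E) : ℕ → (E → E) × (E → E)
  | 0 => (fun x => a + b - Ti (T a + T b - T x),
          fun x => Ti (T a + T b - T (a + b - x)))
  | (n+1) =>
      (fun x => a + b - (MEhp T Ti a b n).2 (a + b - (MEhp T Ti a b n).1 x),
       fun x => (MEhp T Ti a b n).2 (a + b - (MEhp T Ti a b n).1 (a + b - x)))

set_option maxHeartbeats 4000000 in
theorem midpoint_estimate_lipschitz_perturbed
    {E F : Type*} [NormedAddCommGroup E] [NormedSpace ℝ E]
    [NormedAddCommGroup F] [NormedSpace ℝ F]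
    (ε L : ℝ) (hε0 : 0 < ε) (hε1 : ε < 0.2) (hL : 0 ≤ L)
    (T : E → F) (hbij : Function.Bijective T)
    (hT : ∀ x y : E, ‖T x - T y‖ ≤ (1 + ε) * ‖x - y‖ + L)
    (hTinv : ∀ f g : F, ‖Function.invFun T f - Function.invFun T g‖ ≤ (1 + ε) * ‖f - g‖ + L)
    (a b : E) :
    ‖T ((2:ℝ)⁻¹ • (a + b)) - (2:ℝ)⁻¹ • (T a + T b)‖ ≤ 3 * ε * ‖a - b‖ + (4 / ε) * L := by
  classical
  have hε5 : ε < 1/5 := by norm_num at hε1; linarith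
  have h1ε : (0:ℝ) < 1 + ε := by linarith
  have h1ε1 : (1:ℝ) ≤ 1 + ε := by linarith
  set Ti : F → E := Function.invFun T with hTidef
  have hTiT : ∀ x : E, Ti (T x) = x := fun x => Function.leftInverse_invFun hbij.1 x
  have hTTi : ∀ y : F, T (Ti y) = y := fun y => Function.rightInverse_invFun hbij.2 y
  set m : E := (2:ℝ)⁻¹ • (a + b) with hmdef
  set q : F := (2:ℝ)⁻¹ • (T a + T b) with hqdef
  set d : ℝ := ‖a - b‖ with hddef
  have hd0 : 0 ≤ d := norm_nonneg _
  have hab2 : a + b - m = m := by rw [hmdef]; module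
  have hnma : ‖m - a‖ = d / 2 := by
    have h : m - a = (2:ℝ)⁻¹ • (b - a) := by rw [hmdef]; module
    rw [hddef, h, norm_smul, norm_inv, Real.norm_two, norm_sub_rev]; ring
  have hnmb : ‖m - b‖ = d / 2 := by
    have h : m - b = (2:ℝ)⁻¹ • (a - b) := by rw [hmdef]; module
    rw [hddef, h, norm_smul, norm_inv, Real.norm_two]; ring
  set A : ℕ → ℝ := fun k => (1+ε)^(2^(k+1)) with hAdef
  set B : ℕ → ℝ := fun k => (2+ε) * L * ∏ j ∈ Finset.range k, (A j + 1) with hBdef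
  have hA1 : ∀ k, 1 ≤ A k := fun k => one_le_pow₀ h1ε1
  have hA0 : ∀ k, 0 ≤ A k := fun k => le_trans zero_le_one (hA1 k)
  have hB0 : ∀ k, 0 ≤ B k := by
    intro k
    apply mul_nonneg (by positivity)
    apply Finset.prod_nonneg
    intro j _
    linarith [hA1 j]
  have hAsucc : ∀ k, A (k+1) = A k * A k := by
    intro k
    simp only [hAdef]
    rw [← pow_add]
    congr 1
    ring
  have hBsucc : ∀ k, B (k+1) = (A k + 1) * B k := by
    intro k
    simp only [hBdef]
    rw [Finset.prod_range_succ]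
    ring
  have hA0v : A 0 = (1+ε)^2 := by simp [hAdef]
  have hB0v : B 0 = (2+ε)*L := by simp [hBdef]
  -- main structural induction
  have main : ∀ k,
      (∀ x y, ‖(MEhp T Ti a b k).1 x - (MEhp T Ti a b k).1 y‖ ≤ A k * ‖x - y‖ + B k) ∧
      (∀ x y, ‖(MEhp T Ti a b k).2 x - (MEhp T Ti a b k).2 y‖ ≤ A k * ‖x - y‖ + B k) ∧
      (∀ x, (MEhp T Ti a b k).2 ((MEhp T Ti a b k).1 x) = x) ∧
      (∀ x, (MEhp T Ti a b k).1 ((MEhp T Ti a b k).2 x) = x) ∧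
      (MEhp T Ti a b k).1 a = a ∧ (MEhp T Ti a b k).1 b = b ∧
      (MEhp T Ti a b k).2 a = a ∧ (MEhp T Ti a b k).2 b = b := by
    intro k
    induction k with
    | zero =>
      refine ⟨?_, ?_, ?_, ?_, ?_, ?_, ?_, ?_⟩
      · intro x y
        simp only [MEhp]
        have e1 : (a + b - Ti (T a + T b - T x)) - (a + b - Ti (T a + T b - T y))
            = Ti (T a + T b - T y) - Ti (T a + T b - T x) := by abel
        rw [e1]
        have h1 := hTinv (T a + T b - T y) (T a + T b - T x)
        have e2 : (T a + T b - T y) - (T a + T b - T x) = T x - T y := by abel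
        rw [e2] at h1
        have h2 := hT x y
        rw [hA0v, hB0v]
        nlinarith [norm_nonneg (T x - T y)]
      · intro x y
        simp only [MEhp]
        have h1 := hTinv (T a + T b - T (a + b - x)) (T a + T b - T (a + b - y))
        have e2 : (T a + T b - T (a + b - x)) - (T a + T b - T (a + b - y))
            = T (a + b - y) - T (a + b - x) := by abel
        rw [e2] at h1
        have h2 := hT (a + b - y) (a + b - x)
        have e3 : (a + b - y) - (a + b - x) = x - y := by abel
        rw [e3] at h2
        rw [hA0v, hB0v]
        nlinarith [norm_nonneg (T (a + b - y) - T (a + b - x))]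
      · intro x
        simp only [MEhp, sub_sub_cancel]
        rw [hTTi, sub_sub_cancel, hTiT]
      · intro x
        simp only [MEhp]
        rw [hTTi, sub_sub_cancel, hTiT, sub_sub_cancel]
      · simp only [MEhp]
        rw [add_sub_cancel_left, hTiT, add_sub_cancel_right]
      · simp only [MEhp]
        rw [add_sub_cancel_right, hTiT, add_sub_cancel_left]
      · simp only [MEhp]
        rw [add_sub_cancel_left, add_sub_cancel_right, hTiT]
      · simp only [MEhp]
        rw [add_sub_cancel_right, add_sub_cancel_left, hTiT]
    | succ k ih =>
      obtain ⟨L1, L2, I1, I2, Fa, Fb, Ga, Gb⟩ := ih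
      refine ⟨?_, ?_, ?_, ?_, ?_, ?_, ?_, ?_⟩
      · intro x y
        simp only [MEhp]
        have e1 : (a + b - (MEhp T Ti a b k).2 (a + b - (MEhp T Ti a b k).1 x))
            - (a + b - (MEhp T Ti a b k).2 (a + b - (MEhp T Ti a b k).1 y))
            = (MEhp T Ti a b k).2 (a + b - (MEhp T Ti a b k).1 y)
              - (MEhp T Ti a b k).2 (a + b - (MEhp T Ti a b k).1 x) := by abel
        rw [e1]
        have h1 := L2 (a + b - (MEhp T Ti a b k).1 y) (a + b - (MEhp T Ti a b k).1 x)
        have e2 : (a + b - (MEhp T Ti a b k).1 y) - (a + b - (MEhp T Ti a b k).1 x)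
            = (MEhp T Ti a b k).1 x - (MEhp T Ti a b k).1 y := by abel
        rw [e2] at h1
        have h2 := L1 x y
        rw [hAsucc, hBsucc]
        have h3 := mul_le_mul_of_nonneg_left h2 (hA0 k)
        calc ‖(MEhp T Ti a b k).2 (a + b - (MEhp T Ti a b k).1 y)
              - (MEhp T Ti a b k).2 (a + b - (MEhp T Ti a b k).1 x)‖
            ≤ A k * ‖(MEhp T Ti a b k).1 x - (MEhp T Ti a b k).1 y‖ + B k := h1
          _ ≤ A k * ((A k * ‖x - y‖ + B k)) + B k := by linarith
          _ = A k * A k * ‖x - y‖ + (A k + 1) * B k := by ring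
      · intro x y
        simp only [MEhp]
        have h1 := L2 (a + b - (MEhp T Ti a b k).1 (a + b - x))
          (a + b - (MEhp T Ti a b k).1 (a + b - y))
        have e2 : (a + b - (MEhp T Ti a b k).1 (a + b - x))
            - (a + b - (MEhp T Ti a b k).1 (a + b - y))
            = (MEhp T Ti a b k).1 (a + b - y) - (MEhp T Ti a b k).1 (a + b - x) := by abel
        rw [e2] at h1
        have h2 := L1 (a + b - y) (a + b - x)
        have e3 : (a + b - y) - (a + b - x) = x - y := by abel
        rw [e3] at h2
        rw [hAsucc, hBsucc]
        have h3 := mul_le_mul_of_nonneg_left h2 (hA0 k)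
        calc ‖(MEhp T Ti a b k).2 (a + b - (MEhp T Ti a b k).1 (a + b - x))
              - (MEhp T Ti a b k).2 (a + b - (MEhp T Ti a b k).1 (a + b - y))‖
            ≤ A k * ‖(MEhp T Ti a b k).1 (a + b - y) - (MEhp T Ti a b k).1 (a + b - x)‖ + B k := h1
          _ ≤ A k * ((A k * ‖x - y‖ + B k)) + B k := by linarith
          _ = A k * A k * ‖x - y‖ + (A k + 1) * B k := by ring
      · intro x
        simp only [MEhp, sub_sub_cancel]
        rw [I2, sub_sub_cancel, I1]
      · intro x
        simp only [MEhp]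
        rw [I2, sub_sub_cancel, I1, sub_sub_cancel]
      · simp only [MEhp]
        rw [Fa, add_sub_cancel_left, Gb, add_sub_cancel_right]
      · simp only [MEhp]
        rw [Fb, add_sub_cancel_right, Ga, add_sub_cancel_left]
      · simp only [MEhp]
        rw [add_sub_cancel_left, Fb, add_sub_cancel_right, Ga]
      · simp only [MEhp]
        rw [add_sub_cancel_right, Fa, add_sub_cancel_left, Gb]
  set D : ℕ → ℝ := fun k => ‖(MEhp T Ti a b k).1 m - m‖ with hDdef
  have hDnn : ∀ k, 0 ≤ D k := fun k => norm_nonneg _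
  -- F2
  have F2 : ∀ k, D k ≤ A k * (d/2) + B k := by
    intro k
    obtain ⟨L1, _, _, _, Fa, Fb, _, _⟩ := main k
    have h1 := L1 m a
    rw [Fa, hnma] at h1
    have h2 := L1 m b
    rw [Fb, hnmb] at h2
    have hsplit : (MEhp T Ti a b k).1 m - m
        = (2:ℝ)⁻¹ • ((MEhp T Ti a b k).1 m - a) + (2:ℝ)⁻¹ • ((MEhp T Ti a b k).1 m - b) := by
      rw [hmdef]; module
    have : D k ≤ (2:ℝ)⁻¹ * ‖(MEhp T Ti a b k).1 m - a‖
        + (2:ℝ)⁻¹ * ‖(MEhp T Ti a b k).1 m - b‖ := by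
      simp only [hDdef]
      rw [hsplit]
      refine le_trans (norm_add_le _ _) ?_
      rw [norm_smul, norm_smul, norm_inv, Real.norm_two]
    linarith
  -- F1 : doubling
  have F1 : ∀ k, 2 * D k ≤ A k * D (k+1) + B k := by
    intro k
    obtain ⟨L1, _, I1, I2, _, _, _, _⟩ := main k
    have hstep : (MEhp T Ti a b (k+1)).1 m
        = a + b - (MEhp T Ti a b k).2 (a + b - (MEhp T Ti a b k).1 m) := by
      simp only [MEhp]
    have e1 : (MEhp T Ti a b (k+1)).1 m - m
        = m - (MEhp T Ti a b k).2 (a + b - (MEhp T Ti a b k).1 m) := by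
      rw [hstep, sub_right_comm, hab2]
    have h2m : a + b = m + m := eq_add_of_sub_eq hab2
    have e3 : (MEhp T Ti a b k).1 m - (a + b - (MEhp T Ti a b k).1 m)
        = (2:ℝ) • ((MEhp T Ti a b k).1 m - m) := by
      rw [h2m]; module
    have h4 := L1 ((MEhp T Ti a b k).2 ((MEhp T Ti a b k).1 m))
      ((MEhp T Ti a b k).2 (a + b - (MEhp T Ti a b k).1 m))
    rw [I2, I2] at h4
    rw [e3] at h4
    rw [norm_smul, Real.norm_two] at h4
    have e5 : ‖(MEhp T Ti a b k).2 ((MEhp T Ti a b k).1 m)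
        - (MEhp T Ti a b k).2 (a + b - (MEhp T Ti a b k).1 m)‖ = D (k+1) := by
      rw [I1]
      simp only [hDdef]
      rw [e1]
    rw [e5] at h4
    simp only [hDdef] at h4 ⊢
    linarith
  -- F3
  have F3 : 2 * ‖T m - q‖ ≤ (1+ε) * D 0 + L := by
    have hw1 : (MEhp T Ti a b 0).1 m = a + b - Ti (T a + T b - T m) := by
      simp only [MEhp]
    have hTw : T (Ti (T a + T b - T m)) = T a + T b - T m := hTTi _
    have hD0 : D 0 = ‖Ti (T a + T b - T m) - m‖ := by
      simp only [hDdef]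
      rw [hw1, sub_right_comm, hab2]
      exact norm_sub_rev _ _
    have h1 := hT (Ti (T a + T b - T m)) m
    rw [hTw] at h1
    have h2 : T a + T b - T m - T m = (2:ℝ) • (q - T m) := by
      rw [hqdef]; module
    rw [h2, norm_smul, Real.norm_two, norm_sub_rev q] at h1
    rw [hD0]
    linarith
  -- logarithm facts
  set α : ℝ := Real.log (1+ε) with hαdef
  have hα0 : 0 < α := Real.log_pos (by linarith)
  have hεub : α ≤ ε := by
    rw [hαdef, Real.log_le_iff_le_exp h1ε]
    linarith [Real.add_one_le_exp ε]
  have hεlb : ε/(1+ε) ≤ α := by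
    rw [hαdef]
    have h := Real.log_le_sub_one_of_pos (show (0:ℝ) < (1+ε)⁻¹ by positivity)
    rw [Real.log_inv] at h
    have h2 : (1:ℝ) - (1+ε)⁻¹ = ε/(1+ε) := by field_simp; ring
    linarith
  have hl2 : (0:ℝ) < Real.log 2 := Real.log_pos (by norm_num)
  have hl2lb : (2:ℝ)/3 < Real.log 2 := by
    linarith [Real.log_two_gt_d9]
  have hl2ub : Real.log 2 < 0.6931471808 := Real.log_two_lt_d9
  have hexp4 : Real.exp (2 * Real.log 2) = 4 := by
    rw [two_mul, Real.exp_add, Real.exp_log (by norm_num : (0:ℝ) < 2)]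
    norm_num
  have chord : ∀ t : ℝ, Real.log 2 ≤ t → t ≤ 2 * Real.log 2 → Real.exp t ≤ 3 * t := by
    intro t ht1 ht2
    have h2 : Real.exp (Real.log 2) = 2 := Real.exp_log (by norm_num)
    have wa : 0 ≤ 2 - t/Real.log 2 := by
      rw [sub_nonneg, div_le_iff₀ hl2]; linarith
    have wb : 0 ≤ t/Real.log 2 - 1 := by
      rw [sub_nonneg, le_div_iff₀ hl2]; linarith
    have wab : (2 - t/Real.log 2) + (t/Real.log 2 - 1) = 1 := by ring
    have hconv := convexOn_exp.2 (Set.mem_univ (Real.log 2))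
      (Set.mem_univ (2*Real.log 2)) wa wb wab
    simp only [smul_eq_mul] at hconv
    have harg : (2 - t/Real.log 2) * Real.log 2 + (t/Real.log 2 - 1) * (2*Real.log 2) = t := by
      field_simp
      ring
    rw [harg, h2, hexp4] at hconv
    have hval : (2 - t/Real.log 2) * 2 + (t/Real.log 2 - 1) * 4 = 2*(t/Real.log 2) := by ring
    rw [hval] at hconv
    have hfin : 2*(t/Real.log 2) ≤ 3*t := by
      have ht0 : 0 < t := lt_of_lt_of_le hl2 ht1
      have e : 2*(t/Real.log 2) = (2*t)/Real.log 2 := by ring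
      rw [e, div_le_iff₀ hl2]
      have h5 : 0 < t*(3*Real.log 2 - 2) := mul_pos ht0 (by linarith)
      nlinarith [h5]
    linarith
  -- exponential form of A
  have hexpα : Real.exp α = 1 + ε := Real.exp_log h1ε
  have hAexp : ∀ k : ℕ, A k = Real.exp ((2:ℝ)^(k+1) * α) := by
    intro k
    simp only [hAdef]
    rw [← hexpα, ← Real.exp_nat_mul]
    congr 1
    push_cast
    ring
  -- choice of n
  have hex : ∃ j : ℕ, Real.log 2 ≤ 2^(j+2) * α := by
    obtain ⟨j, hj⟩ := exists_nat_gt (Real.log 2 / α)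
    refine ⟨j, ?_⟩
    have h2 : (j:ℝ) ≤ 2^(j+2) := by
      calc (j:ℝ) ≤ 2^j := by exact_mod_cast (Nat.lt_two_pow_self (n := j)).le
        _ ≤ 2^(j+2) := by
            apply pow_le_pow_right₀ (by norm_num : (1:ℝ) ≤ 2)
            omega
    have h3 : (j:ℝ)*α ≤ 2^(j+2)*α := mul_le_mul_of_nonneg_right h2 hα0.le
    rw [div_lt_iff₀ hα0] at hj
    linarith
  obtain ⟨n, hn1, hn2⟩ : ∃ n : ℕ, Real.log 2 ≤ (2:ℝ)^(n+2) * α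
      ∧ (2:ℝ)^(n+2) * α < 2 * Real.log 2 := by
    refine ⟨Nat.find hex, Nat.find_spec hex, ?_⟩
    rcases Nat.eq_zero_or_pos (Nat.find hex) with h0 | hpos
    · rw [h0]
      norm_num
      nlinarith [hl2lb, hεub, hε5, hα0.le]
    · have hne : Nat.find hex - 1 < Nat.find hex := by omega
      have hmin := Nat.find_min hex hne
      push_neg at hmin
      have heq : Nat.find hex - 1 + 2 = Nat.find hex + 1 := by omega
      rw [heq] at hmin
      have he2 : (2:ℝ)^(Nat.find hex + 2) = 2 * 2^(Nat.find hex + 1) := by ring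
      rw [he2]
      nlinarith [hmin]
  -- bounds from choice of n
  have hAn1exp : A (n+1) = Real.exp ((2:ℝ)^(n+2) * α) := hAexp (n+1)
  have hAn1_4 : A (n+1) ≤ 4 := by
    rw [hAn1exp, ← hexp4]
    exact Real.exp_le_exp.mpr hn2.le
  have hAn1_3t : A (n+1) ≤ 3 * ((2:ℝ)^(n+2) * α) := by
    rw [hAn1exp]
    exact chord _ hn1 hn2.le
  have hAmono : ∀ k, k ≤ n → A (k+1) ≤ A (n+1) := by
    intro k hk
    simp only [hAdef]
    apply pow_le_pow_right₀ h1ε1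
    apply Nat.pow_le_pow_right (by norm_num)
    omega
  -- B bound
  have hBbound : ∀ k, B k * (1+ε)^2 ≤ (2+ε)*L*2^k*A k := by
    intro k
    induction k with
    | zero =>
      rw [hB0v, hA0v]
      simp
    | succ k ih =>
      rw [hBsucc, hAsucc]
      have hAk := hA0 k
      have hAk1 := hA1 k
      have h2k : (0:ℝ) < 2^k := by positivity
      have hel : 0 ≤ (2+ε)*L := mul_nonneg (by linarith) hL
      calc (A k + 1) * B k * (1+ε)^2 = (A k + 1) * (B k * (1+ε)^2) := by ring
        _ ≤ (A k + 1) * ((2+ε)*L*2^k*A k) := by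
            apply mul_le_mul_of_nonneg_left ih (by linarith)
        _ = (2+ε)*L*2^k*(A k * A k) + (2+ε)*L*2^k*A k := by ring
        _ ≤ (2+ε)*L*2^k*(A k * A k) + (2+ε)*L*2^k*(A k * A k) := by
            have : A k ≤ A k * A k := le_mul_of_one_le_left hAk hAk1
            nlinarith [mul_nonneg hel h2k.le]
        _ = (2+ε)*L*2^(k+1)*(A k * A k) := by ring
  -- P
  set P : ℕ → ℝ := fun k => A k / ((1+ε)^2 * 2^k) with hPdef
  have hP0 : ∀ k, 0 ≤ P k := by
    intro k
    apply div_nonneg (hA0 k)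
    positivity
  have hPsucc : ∀ k, P (k+1) = P k * A k / 2 := by
    intro k
    simp only [hPdef]
    rw [hAsucc]
    field_simp
    ring
  have hP0v : P 0 = 1 := by
    have hne : ((1+ε)^2 : ℝ) ≠ 0 := by positivity
    simp only [hPdef, hA0v, pow_zero, mul_one]
    exact div_self hne
  have hPB : ∀ k, k ≤ n → P k * B k ≤ 4 * ((2+ε)*L) := by
    intro k hk
    have h1 := hBbound k
    have h2 : A (k+1) ≤ 4 := le_trans (hAmono k hk) hAn1_4
    have hel : 0 ≤ (2+ε)*L := mul_nonneg (by linarith) hL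
    have h2k : (0:ℝ) < 2^k := by positivity
    have he : P k * B k = (B k * (1+ε)^2) * (A k / ((1+ε)^2 * (1+ε)^2 * 2^k)) := by
      simp only [hPdef]
      field_simp
    rw [he]
    have h3 : (B k * (1+ε)^2) * (A k / ((1+ε)^2 * (1+ε)^2 * 2^k))
        ≤ ((2+ε)*L*2^k*A k) * (A k / ((1+ε)^2 * (1+ε)^2 * 2^k)) := by
      apply mul_le_mul_of_nonneg_right h1
      apply div_nonneg (hA0 k)
      positivity
    refine le_trans h3 ?_
    have h4 : ((2+ε)*L*2^k*A k) * (A k / ((1+ε)^2 * (1+ε)^2 * 2^k))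
        = ((2+ε)*L) * (A (k+1) / ((1+ε)^2*(1+ε)^2)) := by
      rw [hAsucc]
      field_simp
    rw [h4]
    have h6 : (1:ℝ) ≤ (1+ε)^2 := one_le_pow₀ h1ε1
    have h5 : A (k+1) / ((1+ε)^2*(1+ε)^2) ≤ 4 := by
      refine le_trans (div_le_self (hA0 _) ?_) h2
      nlinarith [h6]
    calc ((2+ε)*L) * (A (k+1) / ((1+ε)^2*(1+ε)^2)) ≤ ((2+ε)*L) * 4 :=
          mul_le_mul_of_nonneg_left h5 hel
      _ = 4*((2+ε)*L) := by ring
  -- unrolled induction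
  have U : ∀ k, k ≤ n → D 0 ≤ P k * D k + 2*k*((2+ε)*L) := by
    intro k
    induction k with
    | zero =>
      intro _
      rw [hP0v]
      simp
    | succ k ih =>
      intro hk1
      have hk : k ≤ n := by omega
      have h0 := ih hk
      have h1 := F1 k
      have h2 : P k * D k ≤ P k * ((A k * D (k+1) + B k)/2) :=
        mul_le_mul_of_nonneg_left (by linarith) (hP0 k)
      have h3 : P k * ((A k * D (k+1) + B k)/2) = P (k+1) * D (k+1) + (P k * B k)/2 := by
        rw [hPsucc]
        ring
      have h4 := hPB k hk
      have hcast : ((k:ℝ)+1) = ((k+1 : ℕ) : ℝ) := by push_cast; ring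
      push_cast
      push_cast at h0
      linarith [h0, h2, h3 ▸ h2]
  -- final assembly
  have hUn := U n le_rfl
  have hDn := F2 n
  have hPn := hP0 n
  have hel : 0 ≤ (2+ε)*L := mul_nonneg (by linarith) hL
  have h2n : (0:ℝ) < 2^n := by positivity
  have hPnDn : P n * D n ≤ A (n+1)/((1+ε)^2*2^n) * (d/2) + 4*((2+ε)*L) := by
    have h1 : P n * D n ≤ P n * (A n * (d/2) + B n) :=
      mul_le_mul_of_nonneg_left hDn hPn
    have h2 : P n * (A n * (d/2) + B n) = (P n * A n) * (d/2) + P n * B n := by ring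
    have h3 : P n * A n = A (n+1)/((1+ε)^2*2^n) := by
      simp only [hPdef]
      rw [hAsucc]
      field_simp
    have h4 := hPB n le_rfl
    rw [h2, h3] at h1
    linarith
  have hD0b : D 0 ≤ A (n+1)/((1+ε)^2*2^n) * (d/2) + (2*(n:ℝ)+4)*((2+ε)*L) := by
    linarith [hUn, hPnDn]
  -- coefficient of d
  have hc1 : (1+ε) * (A (n+1)/((1+ε)^2*2^n) * (d/2)) ≤ 6*ε*d := by
    have hAb : A (n+1) ≤ 12*ε*2^n*(1+ε) := by
      have h1 : 3*((2:ℝ)^(n+2)*α) = 12*2^n*α := by ring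
      have h2 : (12:ℝ)*2^n*α ≤ 12*2^n*ε := by
        apply mul_le_mul_of_nonneg_left hεub
        positivity
      have h3 : (12:ℝ)*2^n*ε ≤ 12*ε*2^n*(1+ε) := by
        nlinarith [mul_nonneg (mul_nonneg (mul_nonneg (by norm_num : (0:ℝ) ≤ 12) h2n.le) hε0.le) hε0.le]
      have h4 := hAn1_3t
      rw [h1] at h4
      linarith only [h2, h3, h4]
    have heq : (1+ε) * (A (n+1)/((1+ε)^2*2^n) * (d/2)) = A (n+1) * d / (2*(1+ε)*2^n) := by
      field_simp
    rw [heq]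
    rw [div_le_iff₀ (by positivity : (0:ℝ) < 2*(1+ε)*2^n)]
    linarith only [mul_le_mul_of_nonneg_right hAb hd0]
  -- coefficient of L
  have hc2 : (1+ε)*(2+ε)*((n:ℝ)+2) + 1/2 ≤ 4/ε := by
    have hn3 : ((n:ℝ)+2) ≤ 2^(n+1) := by
      have := Nat.lt_two_pow_self (n := n+1)
      have h : ((n:ℝ)+1) + 1 ≤ 2^(n+1) := by exact_mod_cast this
      linarith
    have h2pow : (2:ℝ)^(n+1)*α ≤ Real.log 2 := by
      have he2 : (2:ℝ)^(n+2) = 2 * 2^(n+1) := by ring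
      rw [he2] at hn2
      linarith
    have hna : ((n:ℝ)+2)*α ≤ Real.log 2 := by
      have : ((n:ℝ)+2)*α ≤ 2^(n+1)*α := by
        apply mul_le_mul_of_nonneg_right hn3 hα0.le
      linarith
    have hnε : ((n:ℝ)+2)*ε ≤ Real.log 2 * (1+ε) := by
      have hnn : (0:ℝ) ≤ (n:ℝ)+2 := by positivity
      have h1 : ((n:ℝ)+2)*(ε/(1+ε)) ≤ ((n:ℝ)+2)*α :=
        mul_le_mul_of_nonneg_left hεlb hnn
      have h2 : ((n:ℝ)+2)*(ε/(1+ε)) ≤ Real.log 2 := le_trans h1 hna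
      rw [div_eq_mul_inv] at h2
      have := mul_le_mul_of_nonneg_right h2 h1ε.le
      calc ((n:ℝ)+2)*ε = ((n:ℝ)+2)*(ε*(1+ε)⁻¹)*(1+ε) := by
            field_simp
        _ ≤ Real.log 2 * (1+ε) := this
    rw [le_div_iff₀ hε0]
    have hp1 : (1+ε)*(2+ε) ≤ 2.64 := by nlinarith
    have hp2 : ((n:ℝ)+2)*ε ≤ 0.84 := by nlinarith [hl2ub]
    have hnn2 : (0:ℝ) ≤ ((n:ℝ)+2)*ε := by positivity
    calc ((1+ε)*(2+ε)*((n:ℝ)+2) + 1/2)*ε = (1+ε)*(2+ε)*(((n:ℝ)+2)*ε) + ε/2 := by ring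
      _ ≤ 2.64 * 0.84 + ε/2 := by nlinarith [mul_le_mul hp1 hp2 hnn2 (by norm_num : (0:ℝ) ≤ 2.64)]
      _ ≤ 4 := by norm_num; linarith
  -- put it together
  have hfinal : 2*‖T m - q‖ ≤ 2*(3*ε*d) + 2*((4/ε)*L) := by
    have h1 : (1+ε) * D 0 ≤ (1+ε) * (A (n+1)/((1+ε)^2*2^n) * (d/2) + (2*(n:ℝ)+4)*((2+ε)*L)) :=
      mul_le_mul_of_nonneg_left hD0b h1ε.le
    have h2 : (1+ε) * ((2*(n:ℝ)+4)*((2+ε)*L)) + L ≤ 2*((4/ε)*L) := by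
      have h3 : (1+ε) * ((2*(n:ℝ)+4)*((2+ε)*L)) + L
          = ((1+ε)*(2+ε)*((n:ℝ)+2) + 1/2) * (2*L) := by ring
      rw [h3]
      have h4 : ((1+ε)*(2+ε)*((n:ℝ)+2) + 1/2) * (2*L) ≤ (4/ε) * (2*L) := by
        apply mul_le_mul_of_nonneg_right hc2
        linarith
      have h5 : (4/ε) * (2*L) = 2*((4/ε)*L) := by ring
      rw [h5] at h4
      linarith only [h4]
    have h6 : (1+ε) * (A (n+1)/((1+ε)^2*2^n) * (d/2) + (2*(n:ℝ)+4)*((2+ε)*L))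
        = (1+ε) * (A (n+1)/((1+ε)^2*2^n) * (d/2)) + (1+ε) * ((2*(n:ℝ)+4)*((2+ε)*L)) := by ring
    rw [h6] at h1
    linarith only [F3, hc1, h1, h2]
  have : ‖T m - q‖ ≤ 3*ε*d + (4/ε)*L := by linarith only [hfinal]
  exact this
end

section
/- Let E, F be Banach spaces and T : E → F a surjective map. Suppose ε_T(t) := sup{ |‖Tx−Ty‖ − ‖x−y‖| : ‖x−y‖ ≤ t or ‖Tx−Ty‖ ≤ t } is finite for every t ≥ 0, and suppose there exists δ₀ > 0 with ε_T(δ₀)/δ₀ < 1. Then there exists a bijection T̃ : E → F such that ‖Tx − T̃x‖ ≤ 2δ₀ + 2ε_T(δ₀) for all x ∈ E. -/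
open Cardinal


theorem csb_control {α β : Type*} [Nonempty β] (f : α → β) (g : β → α)
    (hf : Function.Injective f) (hg : Function.Injective g) :
    ∃ h : α → β, Function.Bijective h ∧ ∀ a, h a = f a ∨ g (h a) = a := by
  classical
  set A : Set α := ⋃ n, (g ∘ f)^[n] '' (Set.range g)ᶜ with hA
  have base : ∀ a, a ∉ Set.range g → a ∈ A := fun a ha =>
    Set.mem_iUnion.2 ⟨0, by simpa using ha⟩
  have step : ∀ a ∈ A, g (f a) ∈ A := by
    intro a ha
    rcases Set.mem_iUnion.1 ha with ⟨n, hn⟩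
    refine Set.mem_iUnion.2 ⟨n + 1, ?_⟩
    rcases hn with ⟨b, hb, rfl⟩
    exact ⟨b, hb, by rw [Function.iterate_succ_apply']; rfl⟩
  have pre : ∀ b, g b ∈ A → ∃ a ∈ A, f a = b := by
    intro b hb
    rcases Set.mem_iUnion.1 hb with ⟨n, hn⟩
    cases n with
    | zero =>
      rcases hn with ⟨c, hc, hcb⟩
      simp only [Function.iterate_zero, id] at hcb
      exact absurd (hcb ▸ Set.mem_range_self b) hc
    | succ n =>
      rcases hn with ⟨c, hc, hgc⟩
      rw [Function.iterate_succ_apply'] at hgc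
      refine ⟨(g ∘ f)^[n] c, Set.mem_iUnion.2 ⟨n, ⟨c, hc, rfl⟩⟩, hg hgc⟩
  refine ⟨fun a => if a ∈ A then f a else Function.invFun g a, ⟨?_, ?_⟩, ?_⟩
  · intro a a' h
    by_cases ha : a ∈ A <;> by_cases ha' : a' ∈ A <;> simp [ha, ha'] at h
    · exact hf h
    · rcases (not_imp_comm.1 (base a')) ha' with ⟨b', rfl⟩
      rw [Function.leftInverse_invFun hg b'] at h
      exact absurd (h ▸ step a ha) ha'
    · rcases (not_imp_comm.1 (base a)) ha with ⟨b, rfl⟩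
      rw [Function.leftInverse_invFun hg b] at h
      exact absurd (h ▸ step a' ha') ha
    · rcases (not_imp_comm.1 (base a)) ha with ⟨b, rfl⟩
      rcases (not_imp_comm.1 (base a')) ha' with ⟨b', rfl⟩
      rw [Function.leftInverse_invFun hg b, Function.leftInverse_invFun hg b'] at h
      rw [h]
  · intro b
    by_cases hb : g b ∈ A
    · rcases pre b hb with ⟨a, ha, rfl⟩
      exact ⟨a, by simp [ha]⟩
    · refine ⟨g b, ?_⟩
      simp [hb, Function.leftInverse_invFun hg b]
  · intro a
    by_cases ha : a ∈ A
    · left; simp [ha]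
    · right
      rcases (not_imp_comm.1 (base a)) ha with ⟨b, rfl⟩
      simp [ha, Function.rightInverse_invFun, Function.leftInverse_invFun hg b]


theorem exists_maximal_separated {F : Type*} [NormedAddCommGroup F]
    (δ : ℝ) (P : Set F) :
    ∃ W : Set F, W ⊆ P ∧ (∀ a ∈ W, ∀ b ∈ W, a ≠ b → δ ≤ ‖a - b‖) ∧
      ∀ x ∈ P, (∀ w ∈ W, δ ≤ ‖x - w‖) → x ∈ W := by
  classical
  set S : Set (Set F) := {W | W ⊆ P ∧ ∀ a ∈ W, ∀ b ∈ W, a ≠ b → δ ≤ ‖a - b‖} with hS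
  obtain ⟨M, hM⟩ := zorn_subset S (fun c hc hchain => by
    refine ⟨⋃₀ c, ⟨?_, ?_⟩, fun s hs => Set.subset_sUnion_of_mem hs⟩
    · exact Set.sUnion_subset fun s hs => (hc hs).1
    · intro a ha b hb hab
      rcases ha with ⟨s, hs, has⟩
      rcases hb with ⟨t, ht, hbt⟩
      rcases hchain.total hs ht with h | h
      · exact (hc ht).2 a (h has) b hbt hab
      · exact (hc hs).2 a has b (h hbt) hab)
  refine ⟨M, hM.prop.1, hM.prop.2, ?_⟩
  intro x hx hsep
  have : insert x M ∈ S := by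
    constructor
    · exact Set.insert_subset hx hM.prop.1
    · intro a ha b hb hab
      rcases ha with rfl | ha <;> rcases hb with rfl | hb
      · exact absurd rfl hab
      · exact hsep b hb
      · rw [← norm_neg]; simpa using hsep a ha
      · exact hM.prop.2 a ha b hb hab
  exact (hM.2 this (Set.subset_insert x M)) (Set.mem_insert x M)


theorem series_injective {F : Type*} [NormedAddCommGroup F] [NormedSpace ℝ F] [CompleteSpace F]
    (W : Set F) (hWb : ∀ w ∈ W, ‖w‖ ≤ 1)
    (hsep : ∀ a ∈ W, ∀ b ∈ W, a ≠ b → (1:ℝ)/2 ≤ ‖a - b‖) :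
    Function.Injective (fun f : ℕ → W => ∑' k, ((1:ℝ)/8)^k • ((f k : F))) := by
  classical
  have hr0 : (0:ℝ) ≤ 1/8 := by norm_num
  have hr1 : (1:ℝ)/8 < 1 := by norm_num
  have hsummable : ∀ f : ℕ → W, Summable (fun k => ((1:ℝ)/8)^k • ((f k : F))) := by
    intro f
    apply Summable.of_norm_bounded (summable_geometric_of_lt_one hr0 hr1)
    intro k
    rw [norm_smul]
    calc ‖((1:ℝ)/8)^k‖ * ‖(f k : F)‖ ≤ ‖((1:ℝ)/8)^k‖ * 1 := by
          exact mul_le_mul_of_nonneg_left (hWb _ (f k).2) (norm_nonneg _)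
      _ = ((1:ℝ)/8)^k := by rw [mul_one, Real.norm_eq_abs, abs_of_nonneg (by positivity)]
  intro f g hfg
  by_contra hne
  have hex : ∃ k, f k ≠ g k := by
    by_contra h
    push_neg at h
    exact hne (funext h)
  set k := Nat.find hex with hk
  have hkne : f k ≠ g k := Nat.find_spec hex
  have hklt : ∀ j < k, f j = g j := fun j hj => by
    by_contra h; exact Nat.find_min hex hj h
  -- the difference series
  set d : ℕ → F := fun j => ((1:ℝ)/8)^j • (((f j : F)) - ((g j : F))) with hd
  have hdsum : Summable d := by
    simpa [hd, smul_sub] using (hsummable f).sub (hsummable g)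
  have hbound : ∀ j, ‖d j‖ ≤ ((1:ℝ)/8)^j * 2 := by
    intro j
    rw [hd]
    simp only
    rw [norm_smul, Real.norm_eq_abs, abs_of_nonneg (by positivity)]
    have : ‖(f j : F) - (g j : F)‖ ≤ 2 := by
      calc ‖(f j : F) - (g j : F)‖ ≤ ‖(f j : F)‖ + ‖(g j : F)‖ := norm_sub_le _ _
        _ ≤ 1 + 1 := add_le_add (hWb _ (f j).2) (hWb _ (g j).2)
        _ = 2 := by norm_num
    exact mul_le_mul_of_nonneg_left this (by positivity)
  have htsum0 : ∑' j, d j = 0 := by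
    have hts := Summable.tsum_sub (hsummable f) (hsummable g)
    have : d = fun k => ((1:ℝ)/8)^k • ((f k : F)) - ((1:ℝ)/8)^k • ((g k : F)) := by
      funext j; rw [hd]; simp [smul_sub]
    have hfg' : (∑' k, ((1:ℝ)/8)^k • ((f k : F))) = ∑' k, ((1:ℝ)/8)^k • ((g k : F)) := hfg
    rw [this, hts, hfg', sub_self]
  -- split at k
  have hsplit : ∑ j ∈ Finset.range k, d j + ∑' j, d (j + k) = ∑' j, d j :=
    Summable.sum_add_tsum_nat_add k hdsum
  have hzero : ∑ j ∈ Finset.range k, d j = 0 := by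
    apply Finset.sum_eq_zero
    intro j hj
    rw [hd]
    simp [hklt j (Finset.mem_range.1 hj)]
  have htail : ∑' j, d (j + k) = 0 := by
    rw [htsum0, hzero, zero_add] at hsplit
    exact hsplit
  have hdsum' : Summable (fun j => d (j + k)) := (summable_nat_add_iff k).2 hdsum
  have hshift : ∑' j, d (j + k) = d k + ∑' j, d (j + 1 + k) := by
    rw [Summable.tsum_eq_zero_add hdsum', zero_add]
  have hdk : d k = - ∑' j, d (j + 1 + k) :=
    eq_neg_of_add_eq_zero_left (hshift.symm.trans htail)
  have htailsummable : Summable (fun j => d (j + 1 + k)) := by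
    refine ((summable_nat_add_iff (1 + k)).2 hdsum).congr fun j => ?_
    congr 1
    omega
  have hgeosum : Summable (fun j : ℕ => ((1:ℝ)/8)^(j + 1 + k) * 2) := by
    refine ((summable_geometric_of_lt_one hr0 hr1).mul_left
      (((1:ℝ)/8)^(1+k) * 2)).congr fun j => ?_
    have hj : j + 1 + k = (1 + k) + j := by omega
    rw [hj, pow_add]
    ring
  have hnormsummable : Summable (fun j => ‖d (j + 1 + k)‖) :=
    Summable.of_nonneg_of_le (fun j => norm_nonneg _) (fun j => hbound (j + 1 + k)) hgeosum
  have htail_norm : ‖∑' j, d (j + 1 + k)‖ ≤ (2/7) * ((1:ℝ)/8)^k := by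
    calc ‖∑' j, d (j + 1 + k)‖ ≤ ∑' j, ‖d (j + 1 + k)‖ :=
          norm_tsum_le_tsum_norm hnormsummable
      _ ≤ ∑' j : ℕ, ((1:ℝ)/8)^(j + 1 + k) * 2 :=
          Summable.tsum_le_tsum (fun j => hbound (j + 1 + k)) hnormsummable hgeosum
      _ = (2/7) * ((1:ℝ)/8)^k := by
          have he : ∀ j : ℕ, ((1:ℝ)/8)^(j+1+k) * 2 = (((1:ℝ)/8)^(1+k) * 2) * ((1:ℝ)/8)^j := by
            intro j
            have hj : j + 1 + k = (1 + k) + j := by omega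
            rw [hj, pow_add]; ring
          rw [tsum_congr he, tsum_mul_left, tsum_geometric_of_lt_one hr0 hr1, pow_add]
          norm_num
          ring
  have hdk_norm : ((1:ℝ)/8)^k * (1/2) ≤ ‖d k‖ := by
    rw [hd]
    simp only
    rw [norm_smul, Real.norm_eq_abs, abs_of_nonneg (by positivity)]
    apply mul_le_mul_of_nonneg_left _ (by positivity)
    exact hsep _ (f k).2 _ (g k).2 (fun h => hkne (Subtype.ext h))
  rw [hdk, norm_neg] at hdk_norm
  have hle := hdk_norm.trans htail_norm
  have hpow : (0:ℝ) < ((1:ℝ)/8)^k := by positivity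
  nlinarith


theorem exists_separated_dense_span {F : Type*} [NormedAddCommGroup F] [NormedSpace ℝ F]
    :
    ∃ W : Set F, (∀ w ∈ W, ‖w‖ = 1) ∧
      (∀ a ∈ W, ∀ b ∈ W, a ≠ b → (1:ℝ)/2 ≤ ‖a - b‖) ∧
      Dense (Submodule.span ℝ W : Set F) := by
  obtain ⟨W, hsub, hsep, hmax⟩ := exists_maximal_separated ((1:ℝ)/2) {y : F | ‖y‖ = 1}
  refine ⟨W, fun w hw => hsub hw, hsep, ?_⟩
  rw [Submodule.dense_iff_topologicalClosure_eq_top]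
  by_contra hne
  set V := (Submodule.span ℝ W).topologicalClosure with hV
  obtain ⟨x, hx⟩ : ∃ x : F, x ∉ V := by
    by_contra h
    push_neg at h
    exact hne (Submodule.eq_top_iff'.2 h)
  obtain ⟨x₀, hx₀, hrz⟩ := riesz_lemma (Submodule.isClosed_topologicalClosure _)
    ⟨x, hx⟩ (r := (1:ℝ)/2) (by norm_num)
  have hx₀ne : x₀ ≠ 0 := fun h => hx₀ (h ▸ V.zero_mem)
  have hx₀pos : (0:ℝ) < ‖x₀‖ := norm_pos_iff.2 hx₀ne
  set u : F := ‖x₀‖⁻¹ • x₀ with hu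
  have hunorm : ‖u‖ = 1 := by
    rw [hu, norm_smul, norm_inv, norm_norm, inv_mul_cancel₀ hx₀pos.ne']
  have husep : ∀ w ∈ W, (1:ℝ)/2 ≤ ‖u - w‖ := by
    intro w hw
    have hwV : w ∈ V := (Submodule.span_le.2 (fun _ h => Submodule.subset_span h)
      |>.trans (Submodule.le_topologicalClosure _)) (Submodule.subset_span hw)
    have hy : ‖x₀‖ • w ∈ V := V.smul_mem _ hwV
    have := hrz _ hy
    have hxu : x₀ = ‖x₀‖ • u := by
      rw [hu, smul_smul, mul_inv_cancel₀ hx₀pos.ne', one_smul]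
    have hre : ‖x₀ - ‖x₀‖ • w‖ = ‖x₀‖ * ‖u - w‖ := by
      calc ‖x₀ - ‖x₀‖ • w‖ = ‖‖x₀‖ • (u - w)‖ := by rw [smul_sub, ← hxu]
        _ = ‖x₀‖ * ‖u - w‖ := by rw [norm_smul, norm_norm]
    rw [hre] at this
    have := (mul_le_mul_iff_right₀ hx₀pos).1 (by linarith : ‖x₀‖ * ((1:ℝ)/2) ≤ ‖x₀‖ * ‖u - w‖)
    linarith
  have huW : u ∈ W := hmax u hunorm husep
  have huV : u ∈ V := (Submodule.span_le.2 (fun _ h => Submodule.subset_span h)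
      |>.trans (Submodule.le_topologicalClosure _)) (Submodule.subset_span huW)
  apply hx₀
  rw [show x₀ = ‖x₀‖ • u by rw [hu, smul_smul, mul_inv_cancel₀ hx₀pos.ne', one_smul]]
  exact V.smul_mem _ huV

open Cardinal

universe v

theorem arrow_nat_embed (F : Type v) [NormedAddCommGroup F] [NormedSpace ℝ F]
    [CompleteSpace F] [Nontrivial F] : Nonempty ((ℕ → F) ↪ F) := by
  classical
  -- a unit vector
  obtain ⟨x, hx⟩ := exists_ne (0 : F)
  have hxn : (0:ℝ) < ‖x‖ := norm_pos_iff.2 hx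
  set u : F := ‖x‖⁻¹ • x with hu
  have hun : ‖u‖ = 1 := by rw [hu, norm_smul, norm_inv, norm_norm, inv_mul_cancel₀ hxn.ne']
  have hune : u ≠ 0 := fun h => by rw [h, norm_zero] at hun; norm_num at hun
  -- continuum ≤ #F
  have hRinj : Function.Injective (fun t : ℝ => t • u) := by
    intro s t hst
    have hst' : s • u = t • u := hst
    have h0 : (s - t) • u = 0 := by rw [sub_smul, hst', sub_self]
    rcases smul_eq_zero.1 h0 with h | h
    · exact sub_eq_zero.1 h
    · exact absurd h hune
  have hc : (continuum : Cardinal.{v}) ≤ #F := by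
    have := (Cardinal.lift_mk_le'.2 ⟨⟨fun t : ℝ => t • u, hRinj⟩⟩ :
      Cardinal.lift.{v} #ℝ ≤ Cardinal.lift.{0} #F)
    rwa [Cardinal.mk_real, Cardinal.lift_continuum, Cardinal.lift_uzero] at this
  have haF : (aleph0 : Cardinal.{v}) ≤ #F := aleph0_le_continuum.trans hc
  -- separated set with dense span
  obtain ⟨W, hWn, hWsep, hWd⟩ := exists_separated_dense_span (F := F)
  set W₀ : Set F := insert 0 W with hW₀
  have hW₀b : ∀ w ∈ W₀, ‖w‖ ≤ 1 := by
    intro w hw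
    rcases hw with rfl | hw
    · simp
    · rw [hWn w hw]
  have hW₀sep : ∀ a ∈ W₀, ∀ b ∈ W₀, a ≠ b → (1:ℝ)/2 ≤ ‖a - b‖ := by
    intro a ha b hb hab
    rcases ha with rfl | ha <;> rcases hb with rfl | hb
    · exact absurd rfl hab
    · rw [zero_sub, norm_neg, hWn b hb]; norm_num
    · rw [sub_zero, hWn a ha]; norm_num
    · exact hWsep a ha b hb hab
  have hsig : #(ℕ → W₀) ≤ #F :=
    Cardinal.mk_le_of_injective (series_injective W₀ hW₀b hW₀sep)
  -- list sums cover the span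
  set L : Type v := List (ℝ × W₀) with hL
  set sumOf : L → F := fun l => (l.map (fun p => p.1 • (p.2 : F))).sum with hsum
  have hspan : (Submodule.span ℝ W : Set F) ⊆ Set.range sumOf := by
    intro z hz
    induction hz using Submodule.span_induction with
    | mem w hw => exact ⟨[(1, ⟨w, Set.mem_insert_of_mem _ hw⟩)], by simp [hsum]⟩
    | zero => exact ⟨[], by simp [hsum]⟩
    | add x y hx hy ihx ihy =>
      obtain ⟨lx, hlx⟩ := ihx
      obtain ⟨ly, hly⟩ := ihy
      refine ⟨lx ++ ly, ?_⟩
      simp only [hsum] at hlx hly ⊢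
      rw [List.map_append, List.sum_append, hlx, hly]
    | smul c x hx ihx =>
      obtain ⟨lx, hlx⟩ := ihx
      refine ⟨lx.map (fun p => (c * p.1, p.2)), ?_⟩
      simp only [hsum] at hlx ⊢
      rw [← hlx, List.smul_sum, List.map_map, List.map_map]
      simp only [Function.comp_def, mul_smul]
  -- encode F into ℕ → L
  have hKex : ∀ y : F, ∀ n : ℕ, ∃ l : L, ‖y - sumOf l‖ < 1/(n+1) := by
    intro y n
    have h1 : (0:ℝ) < 1/(n+1) := by positivity
    obtain ⟨z, hz1, hz2⟩ := Metric.mem_closure_iff.1 (hWd y) _ h1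
    obtain ⟨l, rfl⟩ := hspan hz1
    exact ⟨l, by rwa [← dist_eq_norm]⟩
  choose K hK using hKex
  have hKinj : Function.Injective K := by
    intro y y' h
    have hd : ∀ n : ℕ, ‖y - y'‖ < 2/(n+1) := by
      intro n
      have h1 := hK y n
      have h2 := hK y' n
      rw [h] at h1
      calc ‖y - y'‖ = ‖(y - sumOf (K y' n)) - (y' - sumOf (K y' n))‖ := by abel_nf
        _ ≤ ‖y - sumOf (K y' n)‖ + ‖y' - sumOf (K y' n)‖ := norm_sub_le _ _
        _ < 1/(n+1) + 1/(n+1) := add_lt_add h1 h2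
        _ = 2/(n+1) := by ring
    by_contra hne
    have hpos : (0:ℝ) < ‖y - y'‖ := by
      rw [norm_pos_iff, sub_ne_zero]; exact hne
    obtain ⟨n, hn⟩ := exists_nat_gt (2/‖y - y'‖)
    have := hd n
    have hn1 : (2:ℝ)/‖y - y'‖ < n + 1 := hn.trans (by linarith)
    rw [div_lt_iff₀ (by positivity), ← div_lt_iff₀' (by positivity : (0:ℝ) < (n:ℝ)+1)] at hn1
    linarith
  have hKle : #F ≤ #(ℕ → L) := Cardinal.mk_le_of_injective hKinj
  -- cardinal arithmetic
  have harrow : ∀ (X : Type v), #(ℕ → X) = #X ^ (aleph0 : Cardinal.{v}) := by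
    intro X
    rw [Cardinal.mk_arrow, Cardinal.lift_uzero, Cardinal.mk_nat, Cardinal.lift_aleph0]
  have ha1 : (1 : Cardinal.{v}) ≤ #W₀ := by
    haveI : Nonempty W₀ := ⟨⟨0, Set.mem_insert _ _⟩⟩
    exact Cardinal.one_le_iff_ne_zero.2 (Cardinal.mk_ne_zero _)
  have hLle : #L ≤ continuum * #W₀ := by
    refine (Cardinal.mk_list_le_max _).trans ?_
    have hprod : #(ℝ × W₀) = continuum * #W₀ := by
      rw [Cardinal.mk_prod, Cardinal.mk_real, Cardinal.lift_continuum, Cardinal.lift_uzero]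
    rw [hprod]
    apply sup_le _ le_rfl
    calc (aleph0 : Cardinal.{v}) ≤ continuum := aleph0_le_continuum
      _ = continuum * 1 := (mul_one _).symm
      _ ≤ continuum * #W₀ := by exact mul_le_mul_right ha1 _
  have hcpow : (continuum : Cardinal.{v}) ^ (aleph0 : Cardinal.{v}) = continuum :=
    continuum_power_aleph0
  have hLpow : #L ^ (aleph0 : Cardinal.{v}) ≤ #F := by
    calc #L ^ (aleph0 : Cardinal.{v}) ≤ (continuum * #W₀) ^ (aleph0 : Cardinal.{v}) :=
          power_le_power_right hLle
      _ = continuum ^ (aleph0 : Cardinal.{v}) * #W₀ ^ (aleph0 : Cardinal.{v}) :=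
          mul_power
      _ = continuum * #(ℕ → W₀) := by rw [hcpow, harrow]
      _ ≤ #F * #F := mul_le_mul' hc hsig
      _ = #F := mul_eq_self haF
  have hfinal : #(ℕ → F) ≤ #F := by
    calc #(ℕ → F) = #F ^ (aleph0 : Cardinal.{v}) := harrow F
      _ ≤ (#L ^ (aleph0 : Cardinal.{v})) ^ (aleph0 : Cardinal.{v}) :=
          power_le_power_right (hKle.trans_eq (harrow L))
      _ = #L ^ ((aleph0 : Cardinal.{v}) * aleph0) := (power_mul).symm
      _ = #L ^ (aleph0 : Cardinal.{v}) := by rw [aleph0_mul_aleph0]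
      _ ≤ #F := hLpow
  exact Cardinal.le_def _ _ |>.1 hfinal


theorem surjection_close_to_bijection
    {E F : Type*} [NormedAddCommGroup E] [NormedSpace ℝ E] [CompleteSpace E]
    [NormedAddCommGroup F] [NormedSpace ℝ F] [CompleteSpace F]
    (T : E → F) (hsurj : Function.Surjective T)
    (eT : ℝ → ℝ)
    (heT : ∀ t, eT t = sSup {r : ℝ | ∃ x y : E,
      r = |‖T x - T y‖ - ‖x - y‖| ∧ (‖x - y‖ ≤ t ∨ ‖T x - T y‖ ≤ t)})
    (hbdd : ∀ t ≥ (0:ℝ), BddAbove {r : ℝ | ∃ x y : E,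
      r = |‖T x - T y‖ - ‖x - y‖| ∧ (‖x - y‖ ≤ t ∨ ‖T x - T y‖ ≤ t)})
    (δ₀ : ℝ) (hδ₀ : 0 < δ₀) (hratio : eT δ₀ / δ₀ < 1) :
    ∃ T' : E → F, Function.Bijective T' ∧ ∀ x : E, ‖T x - T' x‖ ≤ 2 * δ₀ + 2 * eT δ₀ := by
  classical
  set ε := eT δ₀ with hε
  -- every element of the defining set is a lower bound candidate
  have hmem : ∀ x y : E, T x = T y → ‖x - y‖ ≤ ε := by
    intro x y hxy
    have hmem' : ‖x - y‖ ∈ {r : ℝ | ∃ x y : E,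
        r = |‖T x - T y‖ - ‖x - y‖| ∧ (‖x - y‖ ≤ δ₀ ∨ ‖T x - T y‖ ≤ δ₀)} := by
      refine ⟨x, y, ?_, Or.inr ?_⟩
      · rw [hxy, sub_self, norm_zero, zero_sub, abs_neg, abs_of_nonneg (norm_nonneg _)]
      · rw [hxy, sub_self, norm_zero]; exact hδ₀.le
    have := le_csSup (hbdd δ₀ hδ₀.le) hmem'
    rwa [hε, heT δ₀]
  have hε0 : 0 ≤ ε := by
    have hmem0 : (0:ℝ) ∈ {r : ℝ | ∃ x y : E,
        r = |‖T x - T y‖ - ‖x - y‖| ∧ (‖x - y‖ ≤ δ₀ ∨ ‖T x - T y‖ ≤ δ₀)} := by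
      refine ⟨0, 0, by simp, Or.inl (by simp [hδ₀.le])⟩
    have := le_csSup (hbdd δ₀ hδ₀.le) hmem0
    rwa [hε, heT δ₀]
  -- key separation: if T agrees on all positive integer multiples, points coincide
  have key : ∀ x y : E, (∀ n : ℕ, T (((n:ℝ)+1) • x) = T (((n:ℝ)+1) • y)) → x = y := by
    intro x y hxy
    by_contra hne
    have hpos : (0:ℝ) < ‖x - y‖ := by rw [norm_pos_iff, sub_ne_zero]; exact hne
    obtain ⟨n, hn⟩ := exists_nat_gt (ε / ‖x - y‖)
    have hb : ((n:ℝ)+1) * ‖x - y‖ ≤ ε := by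
      have := hmem (((n:ℝ)+1) • x) (((n:ℝ)+1) • y) (hxy n)
      rwa [← smul_sub, norm_smul, Real.norm_eq_abs,
        abs_of_nonneg (by positivity : (0:ℝ) ≤ (n:ℝ)+1)] at this
    have hn1 : ε / ‖x - y‖ < (n:ℝ) + 1 := hn.trans (by linarith)
    rw [div_lt_iff₀ hpos] at hn1
    linarith
  rcases subsingleton_or_nontrivial F with hF | hF
  · -- F is trivial, hence so is E, and T itself is a bijection
    refine ⟨T, ⟨?_, hsurj⟩, ?_⟩
    · intro a b _
      exact key a b (fun n => Subsingleton.elim _ _)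
    · intro x
      rw [sub_self, norm_zero]
      linarith
  · -- F nontrivial
    obtain ⟨em⟩ := arrow_nat_embed F
    set J : E → (ℕ → F) := fun x k => T (((k:ℝ)+1) • x) with hJ
    have hJinj : Function.Injective J := by
      intro a b hab
      exact key a b (fun n => congrFun hab n)
    set e₁ : E → F := fun x => em (J x) with he₁
    have he₁inj : Function.Injective e₁ := em.injective.comp hJinj
    -- radial squash into a small ball
    set ρ : F → F := fun y => (δ₀/8) • ((1 + ‖y‖)⁻¹ • y) with hρ
    have hρnorm : ∀ y : F, ‖ρ y‖ = (δ₀/8) * ((1 + ‖y‖)⁻¹ * ‖y‖) := by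
      intro y
      have h1 : (0:ℝ) < 1 + ‖y‖ := by positivity
      rw [hρ]
      simp only
      rw [norm_smul, norm_smul, Real.norm_eq_abs, Real.norm_eq_abs,
        abs_of_nonneg (by positivity : (0:ℝ) ≤ δ₀/8),
        abs_of_nonneg (inv_nonneg.2 h1.le)]
    have hρball : ∀ y : F, ‖ρ y‖ ≤ δ₀/8 := by
      intro y
      rw [hρnorm y]
      have h1 : (0:ℝ) < 1 + ‖y‖ := by positivity
      have h2 : (1 + ‖y‖)⁻¹ * ‖y‖ ≤ 1 := by
        rw [← div_eq_inv_mul, div_le_one h1]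
        linarith
      calc (δ₀/8) * ((1 + ‖y‖)⁻¹ * ‖y‖) ≤ (δ₀/8) * 1 :=
            mul_le_mul_of_nonneg_left h2 (by positivity)
        _ = δ₀/8 := mul_one _
    have hρinj : Function.Injective ρ := by
      intro y y' hyy
      have h1 : (0:ℝ) < 1 + ‖y‖ := by positivity
      have h1' : (0:ℝ) < 1 + ‖y'‖ := by positivity
      have hnn := congrArg norm hyy
      rw [hρnorm y, hρnorm y'] at hnn
      have hnorm : ‖y‖ = ‖y'‖ := by
        have h8 : (0:ℝ) < δ₀/8 := by positivity
        have := mul_left_cancel₀ h8.ne' hnn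
        have hcross : ‖y‖ * (1 + ‖y'‖) = ‖y'‖ * (1 + ‖y‖) := by
          field_simp at this
          linarith [this]
        nlinarith [norm_nonneg y, norm_nonneg y']
      have hc : ((δ₀/8) * (1 + ‖y‖)⁻¹) ≠ 0 := by positivity
      have : ((δ₀/8) * (1 + ‖y‖)⁻¹) • y = ((δ₀/8) * (1 + ‖y‖)⁻¹) • y' := by
        rw [hρ] at hyy
        simp only at hyy
        rw [smul_smul, smul_smul] at hyy
        rw [hyy, hnorm]
      exact smul_right_injective F hc this
    set ι : E → F := fun x => ρ (e₁ x) with hι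
    have hιinj : Function.Injective ι := hρinj.comp he₁inj
    have hιball : ∀ x, ‖ι x‖ ≤ δ₀/8 := fun x => hρball _
    -- a maximal δ₀-separated net in F with its retraction
    obtain ⟨N, -, hNsep, hNmax⟩ := exists_maximal_separated δ₀ (Set.univ : Set F)
    have hcov : ∀ y : F, ∃ n ∈ N, ‖y - n‖ < δ₀ := by
      intro y
      by_contra hcon
      push_neg at hcon
      have hyN : y ∈ N := hNmax y trivial (fun w hw => hcon w hw)
      have := hcon y hyN
      rw [sub_self, norm_zero] at this
      linarith
    choose c hcN hcd using hcov
    -- the injection close to T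
    set h : E → F := fun x => c (T x) + ι x with hh
    have hinj : Function.Injective h := by
      intro a b hab
      have hdiff : c (T a) - c (T b) = ι b - ι a := by
        have hab' : c (T a) + ι a = c (T b) + ι b := hab
        rw [sub_eq_sub_iff_add_eq_add, hab']
        exact add_comm _ _
      have hsmall : ‖c (T a) - c (T b)‖ < δ₀ := by
        rw [hdiff]
        calc ‖ι b - ι a‖ ≤ ‖ι b‖ + ‖ι a‖ := norm_sub_le _ _
          _ ≤ δ₀/8 + δ₀/8 := add_le_add (hιball b) (hιball a)
          _ < δ₀ := by linarith
      have hceq : c (T a) = c (T b) := by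
        by_contra hne
        exact absurd (hNsep _ (hcN (T a)) _ (hcN (T b)) hne) (not_le.2 hsmall)
      have : ι a = ι b := by
        rw [hh] at hab
        simp only at hab
        rw [hceq] at hab
        exact add_left_cancel hab
      exact hιinj this
    have hbound : ∀ x, ‖T x - h x‖ ≤ 2*δ₀ + 2*ε := by
      intro x
      rw [hh]
      simp only
      calc ‖T x - (c (T x) + ι x)‖ = ‖(T x - c (T x)) - ι x‖ := by abel_nf
        _ ≤ ‖T x - c (T x)‖ + ‖ι x‖ := norm_sub_le _ _
        _ ≤ δ₀ + δ₀/8 := add_le_add (hcd (T x)).le (hιball x)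
        _ ≤ 2*δ₀ + 2*ε := by linarith
    -- section of T
    set s : F → E := Function.surjInv hsurj with hs
    have hsinj : Function.Injective s := Function.injective_surjInv hsurj
    obtain ⟨T', hT'bij, hT'cases⟩ := csb_control h s hinj hsinj
    refine ⟨T', hT'bij, ?_⟩
    intro x
    rcases hT'cases x with hcase | hcase
    · rw [hcase]; exact hbound x
    · have : T x = T' x := by
        conv_lhs => rw [← hcase]
        rw [hs]
        exact Function.surjInv_eq hsurj (T' x)
      rw [this, sub_self, norm_zero]
      linarith
end

section
/- Let T : E → F be a bijective φ-isometry between Banach spaces with φ(t) = t + t^α for some α ∈ [0,1). Then ‖T((a+b)/2) − (Ta+Tb)/2‖ = O(‖a−b‖^(1/(2−α))) as ‖a−b‖ → ∞; that is, there exist constants C, R > 0 such that for all a,b with ‖a−b‖ ≥ R, ‖T((a+b)/2) − (Ta+Tb)/2‖ ≤ C·‖a−b‖^(1/(2−α)). -/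
set_option linter.unusedSectionVars false
set_option maxHeartbeats 1000000

namespace MidpointGevirtz

variable {E : Type*} [NormedAddCommGroup E] [NormedSpace ℝ E]

def refl2 (a b : E) (z : E) : E := a + b - z

lemma refl2_refl2 (a b z : E) : refl2 a b (refl2 a b z) = z := by simp [refl2]

lemma refl2_left (a b : E) : refl2 a b a = b := by simp [refl2]

lemma refl2_right (a b : E) : refl2 a b b = a := by simp [refl2]

lemma norm_refl2_sub_refl2 (a b z w : E) :
    ‖refl2 a b z - refl2 a b w‖ = ‖z - w‖ := by
  have h : refl2 a b z - refl2 a b w = w - z := by rw [refl2, refl2]; abel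
  rw [h, norm_sub_rev]

lemma refl2_midpoint (a b : E) :
    refl2 a b ((2:ℝ)⁻¹ • (a + b)) = (2:ℝ)⁻¹ • (a + b) := by
  rw [refl2]; module

lemma refl2_sub_self (a b z : E) :
    refl2 a b z - z = (2:ℝ) • ((2:ℝ)⁻¹ • (a + b) - z) := by
  rw [refl2]; module

def seq (a b : E) (u0 v0 : E → E) : ℕ → (E → E) × (E → E)
  | 0 => (u0, v0)
  | k+1 =>
    (fun z => refl2 a b ((seq a b u0 v0 k).2 (refl2 a b ((seq a b u0 v0 k).1 z))),
     fun z => (seq a b u0 v0 k).2 (refl2 a b ((seq a b u0 v0 k).1 (refl2 a b z))))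

lemma seq_invariant (a b : E) (u0 v0 : E → E) (ε Dcap : ℝ) (hε : 0 ≤ ε)
    (h10 : ∀ z, v0 (u0 z) = z) (h01 : ∀ z, u0 (v0 z) = z)
    (hua : u0 a = a) (hub : u0 b = b) (hva : v0 a = a) (hvb : v0 b = b)
    (hMu : ∀ x y : E, ‖x - y‖ + 2 * ε ≤ Dcap → ‖u0 x - u0 y‖ ≤ ‖x - y‖ + 2 * ε)
    (hMv : ∀ x y : E, ‖x - y‖ + 2 * ε ≤ Dcap → ‖v0 x - v0 y‖ ≤ ‖x - y‖ + 2 * ε) :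
    ∀ k : ℕ,
      (∀ z, (seq a b u0 v0 k).2 ((seq a b u0 v0 k).1 z) = z) ∧
      (∀ z, (seq a b u0 v0 k).1 ((seq a b u0 v0 k).2 z) = z) ∧
      (seq a b u0 v0 k).1 a = a ∧ (seq a b u0 v0 k).1 b = b ∧
      (seq a b u0 v0 k).2 a = a ∧ (seq a b u0 v0 k).2 b = b ∧
      (∀ x y : E, ‖x - y‖ + 2^(k+1) * ε ≤ Dcap →
        ‖(seq a b u0 v0 k).1 x - (seq a b u0 v0 k).1 y‖ ≤ ‖x - y‖ + 2^(k+1) * ε) ∧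
      (∀ x y : E, ‖x - y‖ + 2^(k+1) * ε ≤ Dcap →
        ‖(seq a b u0 v0 k).2 x - (seq a b u0 v0 k).2 y‖ ≤ ‖x - y‖ + 2^(k+1) * ε) := by
  intro k
  induction k with
  | zero =>
    refine ⟨h10, h01, hua, hub, hva, hvb, ?_, ?_⟩
    · intro x y h; simpa [seq, pow_one] using hMu x y (by simpa [pow_one] using h)
    · intro x y h; simpa [seq, pow_one] using hMv x y (by simpa [pow_one] using h)
  | succ k ih =>
    obtain ⟨i10, i01, iua, iub, iva, ivb, iMu, iMv⟩ := ih
    set u := (seq a b u0 v0 k).1 with hu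
    set v := (seq a b u0 v0 k).2 with hv
    have hseq : seq a b u0 v0 (k+1) =
      (fun z => refl2 a b (v (refl2 a b (u z))),
       fun z => v (refl2 a b (u (refl2 a b z)))) := rfl
    have hpow : (2:ℝ)^(k+1+1) = 2^(k+1) + 2^(k+1) := by ring
    have hpnn : (0:ℝ) ≤ 2^(k+1) * ε := by positivity
    have hP2 : (2:ℝ)^(k+1+1) * ε = 2^(k+1) * ε + 2^(k+1) * ε := by rw [hpow]; ring
    refine ⟨?_, ?_, ?_, ?_, ?_, ?_, ?_, ?_⟩
    · -- v' ∘ u' = id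
      intro z
      rw [hseq]
      simp only
      rw [refl2_refl2, i01, refl2_refl2, i10]
    · -- u' ∘ v' = id
      intro z
      rw [hseq]
      simp only
      rw [i01, refl2_refl2, i10, refl2_refl2]
    · rw [hseq]; simp only; rw [iua, refl2_left, ivb, refl2_right]
    · rw [hseq]; simp only; rw [iub, refl2_right, iva, refl2_left]
    · rw [hseq]; simp only; rw [refl2_left, iub, refl2_right, iva]
    · rw [hseq]; simp only; rw [refl2_right, iua, refl2_left, ivb]
    · -- modulus for u'
      intro x y h
      rw [hseq]; simp only
      have h1 : ‖x - y‖ + 2^(k+1) * ε ≤ Dcap := by linarith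
      have hu1 := iMu x y h1
      have h2 : ‖refl2 a b (u x) - refl2 a b (u y)‖ = ‖u x - u y‖ :=
        norm_refl2_sub_refl2 a b _ _
      have h3 : ‖refl2 a b (u x) - refl2 a b (u y)‖ + 2^(k+1) * ε ≤ Dcap := by
        rw [h2]; linarith
      have hv1 := iMv (refl2 a b (u x)) (refl2 a b (u y)) h3
      calc ‖refl2 a b (v (refl2 a b (u x))) - refl2 a b (v (refl2 a b (u y)))‖
          = ‖v (refl2 a b (u x)) - v (refl2 a b (u y))‖ := norm_refl2_sub_refl2 a b _ _
        _ ≤ ‖refl2 a b (u x) - refl2 a b (u y)‖ + 2^(k+1) * ε := hv1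
        _ = ‖u x - u y‖ + 2^(k+1) * ε := by rw [h2]
        _ ≤ ‖x - y‖ + 2^(k+1+1) * ε := by linarith
    · -- modulus for v'
      intro x y h
      rw [hseq]; simp only
      have h0 : ‖refl2 a b x - refl2 a b y‖ = ‖x - y‖ := norm_refl2_sub_refl2 a b _ _
      have h1 : ‖refl2 a b x - refl2 a b y‖ + 2^(k+1) * ε ≤ Dcap := by
        rw [h0]; linarith
      have hu1 := iMu (refl2 a b x) (refl2 a b y) h1
      have h3 : ‖refl2 a b (u (refl2 a b x)) - refl2 a b (u (refl2 a b y))‖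
          + 2^(k+1) * ε ≤ Dcap := by
        rw [norm_refl2_sub_refl2]
        have := hu1
        rw [h0] at this
        linarith
      have hv1 := iMv (refl2 a b (u (refl2 a b x))) (refl2 a b (u (refl2 a b y))) h3
      calc ‖v (refl2 a b (u (refl2 a b x))) - v (refl2 a b (u (refl2 a b y)))‖
          ≤ ‖refl2 a b (u (refl2 a b x)) - refl2 a b (u (refl2 a b y))‖ + 2^(k+1) * ε := hv1
        _ = ‖u (refl2 a b x) - u (refl2 a b y)‖ + 2^(k+1) * ε := by rw [norm_refl2_sub_refl2]
        _ ≤ (‖refl2 a b x - refl2 a b y‖ + 2^(k+1) * ε) + 2^(k+1) * ε := by linarith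
        _ ≤ ‖x - y‖ + 2^(k+1+1) * ε := by rw [h0]; linarith

end MidpointGevirtz

open MidpointGevirtz in
theorem midpoint_estimate_power_perturbation
    {E F : Type*} [NormedAddCommGroup E] [NormedSpace ℝ E] [CompleteSpace E]
    [NormedAddCommGroup F] [NormedSpace ℝ F] [CompleteSpace F]
    (α : ℝ) (hα0 : 0 ≤ α) (hα1 : α < 1)
    (T : E → F) (hbij : Function.Bijective T)
    (hT : ∀ x y : E, ‖T x - T y‖ ≤ ‖x - y‖ + ‖x - y‖ ^ α)
    (hTinv : ∀ f g : F, ‖Function.invFun T f - Function.invFun T g‖ ≤ ‖f - g‖ + ‖f - g‖ ^ α) :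
    ∃ C > (0:ℝ), ∃ R > (0:ℝ), ∀ a b : E, R ≤ ‖a - b‖ →
      ‖T ((2:ℝ)⁻¹ • (a + b)) - (2:ℝ)⁻¹ • (T a + T b)‖ ≤ C * ‖a - b‖ ^ (1 / (2 - α)) := by
  have hα2 : (0:ℝ) < 2 - α := by linarith
  have hβα : α < 1 / (2 - α) := by
    rw [lt_div_iff₀ hα2]
    nlinarith [sq_nonneg (1 - α)]
  have hδ : (0:ℝ) < 1 / (2 - α) - α := by linarith
  have hlog2 : (0:ℝ) < Real.log 2 := Real.log_pos (by norm_num)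
  have h1α : (0:ℝ) < 1 - α := by linarith
  refine ⟨8 / ((1 / (2 - α) - α) * Real.log 2) + 104, by positivity,
    (16:ℝ) ^ ((1:ℝ)/(1-α)) + 1, by positivity, ?_⟩
  intro a b hab
  set β := 1 / (2 - α) with hβdef
  set δ := β - α with hδdef
  set d := ‖a - b‖ with hddef
  have hR1 : (1:ℝ) ≤ (16:ℝ) ^ ((1:ℝ)/(1-α)) :=
    Real.one_le_rpow (by norm_num) (by positivity)
  have hd1 : (1:ℝ) ≤ d := by linarith
  have hd0 : (0:ℝ) < d := by linarith
  have hR16 : (16:ℝ) ^ ((1:ℝ)/(1-α)) ≤ d := by linarith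
  have hdpow16 : (16:ℝ) ≤ d ^ (1-α) := by
    have h := Real.rpow_le_rpow (by positivity) hR16 (le_of_lt h1α)
    rw [← Real.rpow_mul (by norm_num : (0:ℝ) ≤ 16)] at h
    have he : (1:ℝ)/(1-α) * (1-α) = 1 := by field_simp
    rwa [he, Real.rpow_one] at h
  set ε₀ := (8*d) ^ α with hε₀def
  have hε₀0 : (0:ℝ) ≤ ε₀ := Real.rpow_nonneg (by positivity) α
  have hε₀8 : ε₀ = 8^α * d^α := Real.mul_rpow (by norm_num) (le_of_lt hd0)
  have h8α : (8:ℝ)^α ≤ 8 := by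
    calc (8:ℝ)^α ≤ 8^(1:ℝ) := Real.rpow_le_rpow_of_exponent_le (by norm_num) (le_of_lt hα1)
      _ = 8 := Real.rpow_one 8
  have h8α1 : (1:ℝ) ≤ (8:ℝ)^α := Real.one_le_rpow (by norm_num) hα0
  have hdα0 : (0:ℝ) ≤ d^α := Real.rpow_nonneg (le_of_lt hd0) α
  have hrpowsum : d^(1-α) * d^α = d := by
    rw [← Real.rpow_add hd0]
    norm_num
  have hε₀d : ε₀ ≤ d := by
    rw [hε₀8]
    calc (8:ℝ)^α * d^α ≤ d^(1-α) * d^α := by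
          apply mul_le_mul_of_nonneg_right _ hdα0
          linarith
      _ = d := hrpowsum
  set y := d^(1-α) / 8^α with hydef
  have h8αpos : (0:ℝ) < 8^α := by positivity
  have hy2 : (2:ℝ) ≤ y := by
    rw [hydef, le_div_iff₀ h8αpos]
    nlinarith
  set x := ⌊y⌋₊ with hxdef
  have hx1 : 1 ≤ x := Nat.le_floor (by push_cast; linarith)
  set K := Nat.log 2 x with hKdef
  have h2Kx : (2:ℕ)^K ≤ x := Nat.pow_log_le_self 2 (by omega)
  have hx2K : x < 2^(K+1) := Nat.lt_pow_succ_log_self (by norm_num) x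
  have h2Ky : (2:ℝ)^K ≤ y := by
    calc ((2:ℝ))^K = ((2^K : ℕ) : ℝ) := by push_cast; ring
      _ ≤ (x:ℝ) := by exact_mod_cast h2Kx
      _ ≤ y := Nat.floor_le (by linarith)
  have hy2K : y < 2^(K+2) := by
    have h1 : y < (x:ℝ) + 1 := Nat.lt_floor_add_one y
    have h2 : ((x:ℝ)) + 1 ≤ 2^(K+1) := by
      have h2' : (x:ℝ) + 1 ≤ ((2^(K+1) : ℕ) : ℝ) := by exact_mod_cast hx2K
      calc (x:ℝ) + 1 ≤ ((2^(K+1) : ℕ) : ℝ) := h2'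
        _ = 2^(K+1) := by push_cast; ring
    have h3 : (2:ℝ)^(K+1) ≤ 2^(K+2) := by
      apply pow_le_pow_right₀ (by norm_num)
      omega
    linarith
  have hyε : y * ε₀ = d := by
    rw [hydef, hε₀8]
    field_simp
    exact hrpowsum
  have hmaster : (2:ℝ)^(K+1) * ε₀ ≤ 2*d := by
    have h1 : (2:ℝ)^K * ε₀ ≤ y * ε₀ := mul_le_mul_of_nonneg_right h2Ky hε₀0
    rw [hyε] at h1
    have h2 : (2:ℝ)^(K+1) = 2 * 2^K := by ring
    rw [h2]
    nlinarith
  have h3d : 3*d ≤ 12*(2^K*ε₀) := by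
    have h4 : y*ε₀ ≤ 2^(K+2)*ε₀ := mul_le_mul_of_nonneg_right (le_of_lt hy2K) hε₀0
    rw [hyε] at h4
    have h5 : (2:ℝ)^(K+2) = 4*2^K := by ring
    rw [h5] at h4
    nlinarith
  -- the maps
  set g := Function.invFun T with hgdef
  have hgT : ∀ x : E, g (T x) = x := fun x => Function.leftInverse_invFun hbij.1 x
  have hTg : ∀ w : F, T (g w) = w := fun w => Function.rightInverse_invFun hbij.2 w
  set m := (2:ℝ)⁻¹ • (a + b) with hmdef
  set q := (2:ℝ)⁻¹ • (T a + T b) with hqdef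
  set u0 : E → E := fun z => refl2 a b (g (refl2 (T a) (T b) (T z))) with hu0def
  set v0 : E → E := fun z => g (refl2 (T a) (T b) (T (refl2 a b z))) with hv0def
  have hModT : ∀ x y : E, ‖x - y‖ ≤ 8*d → ‖T x - T y‖ ≤ ‖x - y‖ + ε₀ := by
    intro x y h
    have h1 : ‖x - y‖^α ≤ ε₀ := Real.rpow_le_rpow (norm_nonneg _) h hα0
    have h2 := hT x y
    linarith
  have hModg : ∀ w v : F, ‖w - v‖ ≤ 8*d → ‖g w - g v‖ ≤ ‖w - v‖ + ε₀ := by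
    intro w v h
    have h1 : ‖w - v‖^α ≤ ε₀ := Real.rpow_le_rpow (norm_nonneg _) h hα0
    have h2 := hTinv w v
    linarith
  have h10 : ∀ z, v0 (u0 z) = z := by
    intro z
    rw [hu0def, hv0def]
    simp only
    rw [refl2_refl2, hTg, refl2_refl2, hgT]
  have h01 : ∀ z, u0 (v0 z) = z := by
    intro z
    rw [hu0def, hv0def]
    simp only
    rw [hTg, refl2_refl2, hgT, refl2_refl2]
  have hua : u0 a = a := by
    rw [hu0def]; simp only
    rw [refl2_left, hgT, refl2_right]
  have hub : u0 b = b := by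
    rw [hu0def]; simp only
    rw [refl2_right, hgT, refl2_left]
  have hva : v0 a = a := by
    rw [hv0def]; simp only
    rw [refl2_left, refl2_right, hgT]
  have hvb : v0 b = b := by
    rw [hv0def]; simp only
    rw [refl2_right, refl2_left, hgT]
  have hMu : ∀ x y : E, ‖x - y‖ + 2 * ε₀ ≤ 8*d → ‖u0 x - u0 y‖ ≤ ‖x - y‖ + 2 * ε₀ := by
    intro x y h
    rw [hu0def]; simp only
    rw [norm_refl2_sub_refl2]
    have h1 : ‖T x - T y‖ ≤ ‖x - y‖ + ε₀ := hModT x y (by linarith)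
    have h2 : ‖refl2 (T a) (T b) (T x) - refl2 (T a) (T b) (T y)‖ = ‖T x - T y‖ :=
      norm_refl2_sub_refl2 _ _ _ _
    have h3 := hModg (refl2 (T a) (T b) (T x)) (refl2 (T a) (T b) (T y)) (by rw [h2]; linarith)
    rw [h2] at h3
    linarith
  have hMv : ∀ x y : E, ‖x - y‖ + 2 * ε₀ ≤ 8*d → ‖v0 x - v0 y‖ ≤ ‖x - y‖ + 2 * ε₀ := by
    intro x y h
    rw [hv0def]; simp only
    have h0 : ‖refl2 a b x - refl2 a b y‖ = ‖x - y‖ := norm_refl2_sub_refl2 _ _ _ _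
    have h1 : ‖T (refl2 a b x) - T (refl2 a b y)‖ ≤ ‖x - y‖ + ε₀ := by
      have h1' := hModT (refl2 a b x) (refl2 a b y) (by rw [h0]; linarith)
      rw [h0] at h1'; exact h1'
    have h2 : ‖refl2 (T a) (T b) (T (refl2 a b x)) - refl2 (T a) (T b) (T (refl2 a b y))‖
        = ‖T (refl2 a b x) - T (refl2 a b y)‖ := norm_refl2_sub_refl2 _ _ _ _
    have h3 := hModg (refl2 (T a) (T b) (T (refl2 a b x)))
      (refl2 (T a) (T b) (T (refl2 a b y))) (by rw [h2]; linarith)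
    rw [h2] at h3
    linarith
  have hInv := seq_invariant a b u0 v0 ε₀ (8*d) hε₀0 h10 h01 hua hub hva hvb hMu hMv
  have hσm : refl2 a b m = m := by rw [hmdef]; exact refl2_midpoint a b
  have hma : ‖m - a‖ = d/2 := by
    have h1 : m - a = (2:ℝ)⁻¹ • (b - a) := by rw [hmdef]; module
    rw [h1, norm_smul, norm_sub_rev, ← hddef]
    simp [Real.norm_eq_abs]
    ring
  -- the cap
  have cap : ∀ k : ℕ, 2^(k+1)*ε₀ ≤ 2*d →
      ‖(seq a b u0 v0 k).1 m - m‖ ≤ d + 2^(k+1)*ε₀ := by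
    intro k hk
    obtain ⟨_, _, hka, _, _, _, hkMu, _⟩ := hInv k
    have h1 : ‖m - a‖ + 2^(k+1)*ε₀ ≤ 8*d := by rw [hma]; linarith
    have h2 := hkMu m a h1
    rw [hka, hma] at h2
    have tri : ‖(seq a b u0 v0 k).1 m - m‖ ≤ ‖(seq a b u0 v0 k).1 m - a‖ + ‖a - m‖ := by
      have h3 := norm_add_le ((seq a b u0 v0 k).1 m - a) (a - m)
      rwa [sub_add_sub_cancel] at h3
    have ham : ‖a - m‖ = d/2 := by rw [norm_sub_rev, hma]
    calc ‖(seq a b u0 v0 k).1 m - m‖ ≤ ‖(seq a b u0 v0 k).1 m - a‖ + ‖a - m‖ := tri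
      _ ≤ (d/2 + 2^(k+1)*ε₀) + d/2 := by rw [ham]; linarith
      _ = d + 2^(k+1)*ε₀ := by ring
  -- the doubling step
  have doubling : ∀ k : ℕ, 2^(k+1+1)*ε₀ ≤ 2*d →
      2 * ‖(seq a b u0 v0 k).1 m - m‖ ≤
        ‖(seq a b u0 v0 (k+1)).1 m - m‖ + 2^(k+1)*ε₀ := by
    intro k hk
    obtain ⟨hk10, hk01, _, _, _, _, hkMu, _⟩ := hInv k
    have hpowk : (2:ℝ)^(k+1+1) = 2*2^(k+1) := by ring
    have hn : (2:ℝ)^(k+1)*ε₀ ≤ d := by rw [hpowk] at hk; linarith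
    have hpnn : (0:ℝ) ≤ 2^(k+1) * ε₀ := by positivity
    set z := (seq a b u0 v0 k).2 (refl2 a b ((seq a b u0 v0 k).1 m)) with hzdef
    have hseq1 : (seq a b u0 v0 (k+1)).1 m = refl2 a b z := rfl
    have hDk1 : ‖(seq a b u0 v0 (k+1)).1 m - m‖ = ‖z - m‖ := by
      rw [hseq1]
      calc ‖refl2 a b z - m‖ = ‖refl2 a b z - refl2 a b m‖ := by rw [hσm]
        _ = ‖z - m‖ := norm_refl2_sub_refl2 _ _ _ _
    have huz : (seq a b u0 v0 k).1 z = refl2 a b ((seq a b u0 v0 k).1 m) := hk01 _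
    have h2D : ‖(seq a b u0 v0 k).1 z - (seq a b u0 v0 k).1 m‖
        = 2 * ‖(seq a b u0 v0 k).1 m - m‖ := by
      rw [huz]
      have h1 : refl2 a b ((seq a b u0 v0 k).1 m) - (seq a b u0 v0 k).1 m
          = (2:ℝ) • (m - (seq a b u0 v0 k).1 m) := by
        rw [hmdef]; exact refl2_sub_self a b _
      rw [h1, norm_smul, norm_sub_rev]
      simp [Real.norm_eq_abs]
    by_cases hcase : ‖z - m‖ + 2^(k+1)*ε₀ ≤ 8*d
    · have h3 := hkMu z m hcase
      rw [h2D] at h3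
      rw [hDk1]
      linarith
    · push_neg at hcase
      have hcapk := cap k (by linarith)
      rw [hDk1]
      linarith
  -- growth by induction
  have growth : ∀ k : ℕ, k ≤ K →
      (2:ℝ)^k * (‖(seq a b u0 v0 0).1 m - m‖ - k * ε₀) ≤ ‖(seq a b u0 v0 k).1 m - m‖ := by
    intro k
    induction k with
    | zero => intro _; simp
    | succ k ih =>
      intro hk1
      have hk : k ≤ K := Nat.le_of_succ_le hk1
      have hcond : (2:ℝ)^(k+1+1)*ε₀ ≤ 2*d := by
        have h1 : (2:ℝ)^(k+1+1) ≤ 2^(K+1) := by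
          apply pow_le_pow_right₀ (by norm_num)
          omega
        calc (2:ℝ)^(k+1+1)*ε₀ ≤ 2^(K+1)*ε₀ := mul_le_mul_of_nonneg_right h1 hε₀0
          _ ≤ 2*d := hmaster
      have hdb := doubling k hcond
      have hih := ih hk
      have hcast : ((k+1:ℕ):ℝ) = (k:ℝ)+1 := by push_cast; ring
      have e1 : (2:ℝ)^(k+1) * (‖(seq a b u0 v0 0).1 m - m‖ - ((k:ℝ)+1)*ε₀)
          = 2*((2:ℝ)^k*(‖(seq a b u0 v0 0).1 m - m‖ - (k:ℝ)*ε₀)) - 2^(k+1)*ε₀ := by ring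
      rw [hcast, e1]
      linarith
  -- combine at K
  have hcapK := cap K hmaster
  have hgrow := growth K le_rfl
  have hD0bound : ‖(seq a b u0 v0 0).1 m - m‖ ≤ (K:ℝ)*ε₀ + 12*ε₀ := by
    have hpow : (0:ℝ) < 2^K := by positivity
    have h6 : (2:ℝ)^K*(‖(seq a b u0 v0 0).1 m - m‖ - (K:ℝ)*ε₀) ≤ 2^K*(12*ε₀) := by
      calc (2:ℝ)^K*(‖(seq a b u0 v0 0).1 m - m‖ - (K:ℝ)*ε₀)
          ≤ ‖(seq a b u0 v0 K).1 m - m‖ := hgrow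
        _ ≤ d + 2^(K+1)*ε₀ := hcapK
        _ ≤ 3*d := by linarith
        _ ≤ 12*(2^K*ε₀) := h3d
        _ = 2^K*(12*ε₀) := by ring
    have h7 := le_of_mul_le_mul_left h6 hpow
    linarith
  -- link with the midpoint deviation
  set z0 := g (refl2 (T a) (T b) (T m)) with hz0def
  have hW01 : (seq a b u0 v0 0).1 m = refl2 a b z0 := rfl
  have hD0z : ‖(seq a b u0 v0 0).1 m - m‖ = ‖z0 - m‖ := by
    rw [hW01]
    calc ‖refl2 a b z0 - m‖ = ‖refl2 a b z0 - refl2 a b m‖ := by rw [hσm]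
      _ = ‖z0 - m‖ := norm_refl2_sub_refl2 _ _ _ _
  have hTz0 : T z0 = refl2 (T a) (T b) (T m) := hTg _
  have h2eta : ‖T z0 - T m‖ = 2*‖T m - q‖ := by
    rw [hTz0]
    have h1 : refl2 (T a) (T b) (T m) - T m = (2:ℝ) • (q - T m) := by
      rw [hqdef]; exact refl2_sub_self (T a) (T b) (T m)
    rw [h1, norm_smul, norm_sub_rev]
    simp [Real.norm_eq_abs]
  have hD0cap : ‖(seq a b u0 v0 0).1 m - m‖ ≤ 3*d := by
    have h1 := cap 0 (by norm_num; linarith)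
    have h2 : (2:ℝ)^(0+1) = 2 := by norm_num
    rw [h2] at h1
    linarith
  have hD0a : ‖z0 - m‖^α ≤ ε₀ := by
    apply Real.rpow_le_rpow (norm_nonneg _) _ hα0
    rw [← hD0z]
    linarith
  have hlink : 2*‖T m - q‖ ≤ ‖(seq a b u0 v0 0).1 m - m‖ + ε₀ := by
    have h1 := hT z0 m
    rw [h2eta] at h1
    rw [hD0z]
    linarith
  have hKe : 2*‖T m - q‖ ≤ ((K:ℝ) + 13)*ε₀ := by
    calc 2*‖T m - q‖ ≤ ‖(seq a b u0 v0 0).1 m - m‖ + ε₀ := hlink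
      _ ≤ ((K:ℝ)*ε₀ + 12*ε₀) + ε₀ := by linarith
      _ = ((K:ℝ) + 13)*ε₀ := by ring
  -- bound K
  have h2Kd : (2:ℝ)^K ≤ d := by
    have hy3 : y ≤ d^(1-α) := by
      rw [hydef]
      apply div_le_self (Real.rpow_nonneg (le_of_lt hd0) _) h8α1
    have hd4 : d^(1-α) ≤ d := by
      calc d^(1-α) ≤ d^(1:ℝ) := Real.rpow_le_rpow_of_exponent_le hd1 (by linarith)
        _ = d := Real.rpow_one d
    linarith
  have hKlog : (K:ℝ) * Real.log 2 ≤ Real.log d := by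
    calc (K:ℝ)*Real.log 2 = Real.log ((2:ℝ)^K) := by rw [Real.log_pow]
      _ ≤ Real.log d := Real.log_le_log (by positivity) h2Kd
  have hlogd : Real.log d ≤ d^δ / δ := by
    have h1 : Real.log (d^δ) ≤ d^δ - 1 := Real.log_le_sub_one_of_pos (Real.rpow_pos_of_pos hd0 δ)
    rw [Real.log_rpow hd0] at h1
    rw [le_div_iff₀ hδ]
    nlinarith
  -- final assembly
  have hK2 : (K:ℝ) ≤ d^δ/(δ*Real.log 2) := by
    rw [le_div_iff₀ (by positivity)]
    calc (K:ℝ)*(δ*Real.log 2) = ((K:ℝ)*Real.log 2)*δ := by ring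
      _ ≤ (Real.log d)*δ := mul_le_mul_of_nonneg_right hKlog (le_of_lt hδ)
      _ ≤ (d^δ/δ)*δ := mul_le_mul_of_nonneg_right hlogd (le_of_lt hδ)
      _ = d^δ := by field_simp
  have hprod : d^δ * d^α = d^β := by
    rw [← Real.rpow_add hd0]
    congr 1
    rw [hδdef]; ring
  have hdab : d^α ≤ d^β := Real.rpow_le_rpow_of_exponent_le hd1 (le_of_lt hβα)
  have hε₀8d : ε₀ ≤ 8*d^α := by
    rw [hε₀8]
    nlinarith
  have hKnn : (0:ℝ) ≤ (K:ℝ) := Nat.cast_nonneg K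
  have hfin1 : ((K:ℝ)+13)*ε₀ ≤ 8*(K:ℝ)*d^α + 104*d^α := by
    calc ((K:ℝ)+13)*ε₀ ≤ ((K:ℝ)+13)*(8*d^α) :=
          mul_le_mul_of_nonneg_left hε₀8d (by linarith)
      _ = 8*(K:ℝ)*d^α + 104*d^α := by ring
  have hfin2 : 8*(K:ℝ)*d^α ≤ 8/(δ*Real.log 2) * d^β := by
    have h1 : (K:ℝ)*d^α ≤ (d^δ/(δ*Real.log 2))*d^α := mul_le_mul_of_nonneg_right hK2 hdα0
    calc 8*(K:ℝ)*d^α = 8*((K:ℝ)*d^α) := by ring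
      _ ≤ 8*((d^δ/(δ*Real.log 2))*d^α) := by linarith
      _ = 8/(δ*Real.log 2) * (d^δ*d^α) := by ring
      _ = 8/(δ*Real.log 2) * d^β := by rw [hprod]
  have hgoal : 2*‖T m - q‖ ≤ (8/(δ*Real.log 2) + 104) * d^β := by
    calc 2*‖T m - q‖ ≤ ((K:ℝ)+13)*ε₀ := hKe
      _ ≤ 8*(K:ℝ)*d^α + 104*d^α := hfin1
      _ ≤ 8/(δ*Real.log 2)*d^β + 104*d^β := by linarith
      _ = (8/(δ*Real.log 2) + 104)*d^β := by ring
  have hdb0 : (0:ℝ) ≤ d^β := Real.rpow_nonneg (le_of_lt hd0) β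
  have hnn : (0:ℝ) ≤ ‖T m - q‖ := norm_nonneg _
  linarith
end

section
/- Let ε : ℝ≥0 → ℝ>0 be non-decreasing with ε(t) = t^α (α ∈ [0,1)) and φ(t) = t + ε(t). Then there is a constant C = C(α) such that for all t ≥ 1 and n ≥ 1, φ^n(t) ≤ C·(t^(1−α) + n)^(1/(1−α)). -/
theorem iterate_power_perturbation_bound
    (α : ℝ) (hα0 : 0 ≤ α) (hα1 : α < 1)
    (ε : ℝ → ℝ) (hε : ∀ t, ε t = t ^ α)
    (φ : ℝ → ℝ) (hφ : ∀ t, φ t = t + ε t) :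
    ∃ C > (0:ℝ), ∀ t ≥ (1:ℝ), ∀ n : ℕ, 1 ≤ n →
      φ^[n] t ≤ C * (t ^ (1 - α) + n) ^ (1 / (1 - α)) := by
  have hβ : (0:ℝ) < 1 - α := by linarith
  refine ⟨1, one_pos, fun t ht n _ => ?_⟩
  -- key step: for s ≥ 1, (φ s)^(1-α) ≤ s^(1-α) + 1
  have key : ∀ s : ℝ, 1 ≤ s → (φ s) ^ (1 - α) ≤ s ^ (1 - α) + 1 := by
    intro s hs
    have hs0 : (0:ℝ) < s := by linarith
    have hsa : (0:ℝ) < s ^ α := Real.rpow_pos_of_pos hs0 α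
    rw [hφ, hε]
    have hfac : s + s ^ α = s * (1 + s ^ (α - 1)) := by
      have hmul : s * s ^ (α - 1) = s ^ α := by
        have h := Real.rpow_add hs0 1 (α - 1)
        rw [Real.rpow_one] at h
        rw [← h]; norm_num
      rw [mul_add, mul_one, hmul]
    rw [hfac, Real.mul_rpow (by positivity) (by positivity)]
    have hbern : (1 + s ^ (α - 1)) ^ (1 - α) ≤ 1 + (1 - α) * s ^ (α - 1) :=
      rpow_one_add_le_one_add_mul_self (by nlinarith [Real.rpow_pos_of_pos hs0 (α-1)]) (le_of_lt hβ) (by linarith)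
    calc s ^ (1 - α) * (1 + s ^ (α - 1)) ^ (1 - α)
        ≤ s ^ (1 - α) * (1 + (1 - α) * s ^ (α - 1)) := by
          apply mul_le_mul_of_nonneg_left hbern (by positivity)
      _ = s ^ (1 - α) + (1 - α) * (s ^ (1 - α) * s ^ (α - 1)) := by ring
      _ = s ^ (1 - α) + (1 - α) := by
          rw [← Real.rpow_add hs0]; norm_num
      _ ≤ s ^ (1 - α) + 1 := by linarith
  -- induction: φ^[n] t ≥ 1 and (φ^[n] t)^(1-α) ≤ t^(1-α) + n
  have main : ∀ m : ℕ, 1 ≤ φ^[m] t ∧ (φ^[m] t) ^ (1 - α) ≤ t ^ (1 - α) + m := by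
    intro m
    induction m with
    | zero => exact ⟨by simpa using ht, by simp⟩
    | succ k ih =>
      obtain ⟨h1, h2⟩ := ih
      rw [Function.iterate_succ_apply']
      have hs0 : (0:ℝ) < φ^[k] t := by linarith
      constructor
      · rw [hφ, hε]
        have : (0:ℝ) ≤ (φ^[k] t) ^ α := le_of_lt (Real.rpow_pos_of_pos hs0 α)
        linarith
      · calc (φ (φ^[k] t)) ^ (1 - α) ≤ (φ^[k] t) ^ (1 - α) + 1 := key _ h1
          _ ≤ t ^ (1 - α) + k + 1 := by linarith
          _ = t ^ (1 - α) + (k + 1 : ℕ) := by push_cast; ring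
  obtain ⟨h1, h2⟩ := main n
  rw [one_mul]
  have h0 : (0:ℝ) < φ^[n] t := by linarith
  calc φ^[n] t = ((φ^[n] t) ^ (1 - α)) ^ (1 / (1 - α)) := by
        rw [← Real.rpow_mul (le_of_lt h0), one_div,
          mul_inv_cancel₀ (ne_of_gt hβ), Real.rpow_one]
    _ ≤ (t ^ (1 - α) + n) ^ (1 / (1 - α)) := by
        apply Real.rpow_le_rpow (by positivity) h2 (by positivity)
end

section
/- Let X, Y be locally compact Hausdorff spaces, 1 < M < √2, L ≥ 0, and T : C₀(X) → C₀(Y) a bijective φ-isometry for φ(t) = Mt + L with T(0) = 0. Then for every g ∈ C₀(X), ‖Tg − T(−g)‖ ≥ (2/M)‖g‖ − L, and consequently for ‖g‖ = m with m large enough (depending on M, L; any m > 0 if L = 0) there exists y ∈ Y such that Tg(y) and T(−g)(y) have opposite signs, with Tg(y) − T(−g)(y) ≥ (2/M)m − L in absolute value, yielding |Tg(y)| ≥ (2/M − M)m − 2L and |T(−g)(y)| ≥ (2/M − M)m − 2L. -/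
open ZeroAtInfty

lemma C0_exists_norm_eq {Y : Type*} [TopologicalSpace Y]
    (h : C₀(Y, ℝ)) (hpos : 0 < ‖h‖) : ∃ y, |h y| = ‖h‖ := by
  have hle : ∀ y, |h y| ≤ ‖h‖ := fun y => by
    have := h.toBCF.norm_coe_le_norm y
    simpa [ZeroAtInftyContinuousMap.norm_toBCF_eq_norm, Real.norm_eq_abs] using this
  -- the set where |h| ≥ ‖h‖/2 is compact and nonempty
  set S : Set Y := {y | ‖h‖ / 2 ≤ |h y|} with hS
  have hclosed : IsClosed S := by
    have : Continuous fun y => |h y| := h.continuous.abs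
    exact isClosed_le continuous_const this
  have htend : Filter.Tendsto h (Filter.cocompact Y) (nhds 0) :=
    ZeroAtInftyContinuousMapClass.zero_at_infty h
  have hmem : {y | |h y| < ‖h‖ / 2} ∈ Filter.cocompact Y := by
    have := Metric.tendsto_nhds.mp htend (‖h‖ / 2) (by linarith)
    exact (by simpa [Real.dist_eq, abs_sub_comm] using this : ∀ᶠ y in Filter.cocompact Y, |h y| < ‖h‖ / 2)
  obtain ⟨K, hK, hKsub⟩ := Filter.mem_cocompact.mp hmem
  have hSK : S ⊆ K := by
    intro y hy
    by_contra hyK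
    have : |h y| < ‖h‖ / 2 := hKsub hyK
    exact absurd hy (by simp [hS]; linarith)
  have hScompact : IsCompact S := hK.of_isClosed_subset hclosed hSK
  have hSne : S.Nonempty := by
    by_contra hne
    have hall : ∀ y, |h y| ≤ ‖h‖ / 2 := by
      intro y
      by_contra hy
      exact hne ⟨y, le_of_lt (lt_of_not_ge hy)⟩
    have : ‖h‖ ≤ ‖h‖ / 2 := by
      rw [← ZeroAtInftyContinuousMap.norm_toBCF_eq_norm]
      exact BoundedContinuousFunction.norm_le (by positivity) |>.mpr
        (fun y => by simpa [Real.norm_eq_abs] using hall y)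
    linarith
  obtain ⟨y₀, hy₀S, hy₀max⟩ := hScompact.exists_isMaxOn hSne
    (h.continuous.abs.continuousOn)
  refine ⟨y₀, le_antisymm (hle y₀) ?_⟩
  have hall : ∀ y, |h y| ≤ |h y₀| := by
    intro y
    by_cases hy : y ∈ S
    · exact hy₀max hy
    · have h1 : |h y| < ‖h‖ / 2 := by
        by_contra hc
        exact hy (le_of_not_gt hc)
      exact le_trans h1.le (le_trans hy₀S (le_refl _))
  rw [← ZeroAtInftyContinuousMap.norm_toBCF_eq_norm]
  exact BoundedContinuousFunction.norm_le (abs_nonneg _) |>.mpr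
    (fun y => by simpa [Real.norm_eq_abs] using hall y)

theorem C0_phi_isometry_opposite_signs
    {X Y : Type*} [TopologicalSpace X] [LocallyCompactSpace X] [T2Space X]
    [TopologicalSpace Y] [LocallyCompactSpace Y] [T2Space Y]
    (M L : ℝ) (hM1 : 1 < M) (hM2 : M < Real.sqrt 2) (hL : 0 ≤ L)
    (T : C₀(X, ℝ) → C₀(Y, ℝ)) (hbij : Function.Bijective T) (hT0 : T 0 = 0)
    (hT : ∀ f g : C₀(X, ℝ), ‖T f - T g‖ ≤ M * ‖f - g‖ + L)
    (hTinv : ∀ u v : C₀(Y, ℝ), ‖Function.invFun T u - Function.invFun T v‖ ≤ M * ‖u - v‖ + L) :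
    (∀ g : C₀(X, ℝ), (2 / M) * ‖g‖ - L ≤ ‖T g - T (-g)‖) ∧
    ∃ m₀ : ℝ, 0 ≤ m₀ ∧ (L = 0 → m₀ = 0) ∧
      ∀ g : C₀(X, ℝ), m₀ < ‖g‖ →
        ∃ y : Y, (T g) y * (T (-g)) y < 0 ∧
          (2 / M) * ‖g‖ - L ≤ |(T g) y - (T (-g)) y| ∧
          (2 / M - M) * ‖g‖ - 2 * L ≤ |(T g) y| ∧
          (2 / M - M) * ‖g‖ - 2 * L ≤ |(T (-g)) y| := by
  have hM0 : (0:ℝ) < M := lt_trans one_pos hM1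
  have hMsq : M ^ 2 < 2 := by
    have h2 : (Real.sqrt 2) ^ 2 = 2 := Real.sq_sqrt (by norm_num)
    calc M ^ 2 < (Real.sqrt 2) ^ 2 := by
          exact pow_lt_pow_left₀ hM2 hM0.le two_ne_zero
      _ = 2 := h2
  have hc : 0 < 2 / M - M := by
    rw [sub_pos, lt_div_iff₀ hM0]
    nlinarith
  -- Part 1
  have part1 : ∀ g : C₀(X, ℝ), (2 / M) * ‖g‖ - L ≤ ‖T g - T (-g)‖ := by
    intro g
    have h1 : Function.invFun T (T g) = g := Function.leftInverse_invFun hbij.1 g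
    have h2 : Function.invFun T (T (-g)) = -g := Function.leftInverse_invFun hbij.1 (-g)
    have h3 := hTinv (T g) (T (-g))
    rw [h1, h2] at h3
    have h4 : g - -g = (2:ℝ) • g := by
      rw [sub_neg_eq_add, two_smul ℝ g]
    rw [h4, norm_smul (2:ℝ) g] at h3
    simp only [Real.norm_ofNat] at h3
    have hg0 : 0 ≤ ‖g‖ := norm_nonneg g
    rw [div_mul_eq_mul_div, sub_le_iff_le_add, div_le_iff₀ hM0]
    nlinarith
  refine ⟨part1, 2 * L / (2 / M - M), by positivity, fun hL0 => by simp [hL0], ?_⟩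
  intro g hm
  set m := ‖g‖ with hmdef
  have hm0 : 0 ≤ m := norm_nonneg g
  have hmc : 2 * L < (2 / M - M) * m := by
    rw [div_lt_iff₀ hc] at hm
    linarith [hm]
  -- bounds on ‖T g‖ and ‖T (-g)‖
  have hTg : ‖T g‖ ≤ M * m + L := by
    have := hT g 0
    simpa [hT0, hmdef] using this
  have hTng : ‖T (-g)‖ ≤ M * m + L := by
    have := hT (-g) 0
    simpa [hT0, hmdef] using this
  set h : C₀(Y, ℝ) := T g - T (-g) with hh
  have hnorm : (2 / M) * m - L ≤ ‖h‖ := part1 g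
  have hpos : 0 < ‖h‖ := by
    have : 0 < (2 / M) * m - L := by nlinarith
    linarith
  obtain ⟨y, hy⟩ := C0_exists_norm_eq h hpos
  have hyval : h y = (T g) y - (T (-g)) y := by
    simp [hh]
  set a := (T g) y with ha
  set b := (T (-g)) y with hb
  have haA : |a| ≤ M * m + L := by
    have h1 : |a| ≤ ‖T g‖ := by
      have := (T g).toBCF.norm_coe_le_norm y
      simpa [ZeroAtInftyContinuousMap.norm_toBCF_eq_norm, Real.norm_eq_abs] using this
    linarith
  have hbA : |b| ≤ M * m + L := by
    have h1 : |b| ≤ ‖T (-g)‖ := by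
      have := (T (-g)).toBCF.norm_coe_le_norm y
      simpa [ZeroAtInftyContinuousMap.norm_toBCF_eq_norm, Real.norm_eq_abs] using this
    linarith
  have habs : (2 / M) * m - L ≤ |a - b| := by
    rw [← hyval, hy]; exact hnorm
  have hcm : 0 < (2 / M - M) * m - 2 * L := by linarith
  have hKeq : (2 / M) * m - L = ((2 / M - M) * m - 2 * L) + (M * m + L) := by ring
  rcases le_or_gt 0 (a - b) with hab | hab
  · have habs' : (2 / M) * m - L ≤ a - b := by rwa [abs_of_nonneg hab] at habs
    have hapos : (2 / M - M) * m - 2 * L ≤ a := by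
      have := neg_abs_le b
      linarith
    have hbneg : (2 / M - M) * m - 2 * L ≤ -b := by
      have := le_abs_self a
      linarith
    have ha0 : 0 < a := lt_of_lt_of_le hcm hapos
    have hb0 : b < 0 := by linarith [lt_of_lt_of_le hcm hbneg]
    exact ⟨y, mul_neg_of_pos_of_neg ha0 hb0, habs,
      by rwa [abs_of_pos ha0], by rwa [abs_of_neg hb0]⟩
  · have habs' : (2 / M) * m - L ≤ b - a := by
      rw [abs_of_neg (by linarith : a - b < 0)] at habs; linarith
    have hbpos : (2 / M - M) * m - 2 * L ≤ b := by
      have := neg_abs_le a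
      linarith
    have haneg : (2 / M - M) * m - 2 * L ≤ -a := by
      have := le_abs_self b
      linarith
    have hb0 : 0 < b := lt_of_lt_of_le hcm hbpos
    have ha0 : a < 0 := by linarith [lt_of_lt_of_le hcm haneg]
    exact ⟨y, mul_neg_of_neg_of_pos ha0 hb0, habs,
      by rwa [abs_of_neg ha0], by rwa [abs_of_pos hb0]⟩
end

section
/- Let E, F be normed spaces, T : E → F a bijective φ-isometry for φ(t) = Mt + L with 1 < M < 1.2 and L ≥ 0, and let f, g ∈ E with ‖f‖, ‖g‖ ≤ m. Then ‖T((f+g)/2) − (Tf+Tg)/2‖ ≤ 3(M−1)·2m + (4/(M−1))·L ≤ 6(M−1)m + (4/(M−1))L. -/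
/-- Auxiliary coefficient function tracking the additive constant in the
midpoint-defect recursion. -/
noncomputable def psiAux : ℕ → ℝ → ℝ
  | 0, _ => 1
  | n+1, A => (A * (A + 1) * psiAux n (A ^ 2) + 1) / 2

lemma psi_nonneg : ∀ (n : ℕ) (A : ℝ), 0 ≤ A → 0 ≤ psiAux n A := by
  intro n
  induction n with
  | zero => intro A hA; norm_num [psiAux]
  | succ n ih =>
    intro A hA
    have hp : 0 ≤ psiAux n (A ^ 2) := ih (A ^ 2) (by positivity)
    have h1 : 0 ≤ A * (A + 1) * psiAux n (A ^ 2) := by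
      apply mul_nonneg (mul_nonneg hA (by linarith)) hp
    simp only [psiAux]
    linarith

lemma psi_le : ∀ (n : ℕ) (A : ℝ), 1 < A → A ^ (2 ^ n) ≤ 2 → (A - 1) * psiAux n A ≤ 4 := by
  intro n
  induction n with
  | zero =>
    intro A hA h
    simp only [psiAux, pow_zero, pow_one] at *
    linarith
  | succ n ih =>
    intro A hA h
    have hA0 : (0:ℝ) < A := by linarith
    have hA2 : 1 < A ^ 2 := by nlinarith
    have he : (A ^ 2) ^ (2 ^ n) = A ^ (2 ^ (n+1)) := by
      rw [← pow_mul]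
      congr 1
      rw [Nat.pow_succ, Nat.mul_comm]
    have ihA : (A ^ 2 - 1) * psiAux n (A ^ 2) ≤ 4 := ih (A ^ 2) hA2 (by rw [he]; exact h)
    have hp : 0 ≤ psiAux n (A ^ 2) := psi_nonneg n _ (by positivity)
    have hsq : A ^ 2 ≤ 2 := by
      calc A ^ 2 ≤ A ^ (2 ^ (n+1)) := by
            apply pow_le_pow_right₀ hA.le
            have : 1 ≤ 2 ^ n := Nat.one_le_two_pow
            calc 2 = 2 * 1 := by ring
              _ ≤ 2 * 2 ^ n := by omega
              _ = 2 ^ (n+1) := by rw [Nat.pow_succ, Nat.mul_comm]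
        _ ≤ 2 := h
    have hA18 : A ≤ 9/5 := by nlinarith
    simp only [psiAux]
    nlinarith [mul_nonneg hA0.le (sub_nonneg.mpr ihA), hp]

/-- Chord bound for `log` on `[2,4]`. -/
lemma log_chord {x : ℝ} (h1 : 2 ≤ x) (h2 : x ≤ 4) : x * Real.log 2 / 2 ≤ Real.log x := by
  have hc := (strictConcaveOn_log_Ioi.concaveOn).2 (Set.mem_Ioi.mpr (by norm_num : (0:ℝ) < 2))
      (Set.mem_Ioi.mpr (by norm_num : (0:ℝ) < 4))
      (show (0:ℝ) ≤ (4 - x) / 2 by linarith) (show (0:ℝ) ≤ (x - 2) / 2 by linarith)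
      (show (4 - x) / 2 + (x - 2) / 2 = 1 by ring)
  simp only [smul_eq_mul] at hc
  have harg : (4 - x)/2 * 2 + (x - 2)/2 * 4 = x := by ring
  have h4 : Real.log 4 = 2 * Real.log 2 := by
    rw [show (4:ℝ) = 2 ^ (2:ℕ) by norm_num, Real.log_pow]
    push_cast; ring
  rw [harg, h4] at hc
  nlinarith [hc]

/-- The coefficient bound: if `M^(2^(j+1)) ≤ 2 < M^(2^(j+2))` then
`M^(2^(j+2)-1) / 2^(j+2) ≤ 3(M-1)`. -/
lemma coeff_bound (M : ℝ) (j : ℕ) (hM1 : 1 < M) (h1 : M ^ (2 ^ (j+1)) ≤ 2)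
    (h2 : 2 < M ^ (2 ^ (j+2))) :
    M ^ (2 ^ (j+2) - 1) / 2 ^ (j+2) ≤ 3 * (M - 1) := by
  have hM0 : (0:ℝ) < M := by linarith
  set x := M ^ (2 ^ (j+2)) with hx
  set y := M ^ (2 ^ (j+2) - 1) with hy
  set t := ((2:ℝ)) ^ (j+2) with htdef
  have hx0 : (0:ℝ) < x := by positivity
  have hy0 : (0:ℝ) ≤ y := by positivity
  have ht : (0:ℝ) < t := by positivity
  have hx4 : x ≤ 4 := by
    have hsq : x = (M ^ (2 ^ (j+1))) ^ 2 := by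
      rw [hx, ← pow_mul, Nat.pow_succ]
    have h0 : (0:ℝ) ≤ M ^ (2 ^ (j+1)) := by positivity
    nlinarith [h1, h0]
  have hlogx : Real.log x = t * Real.log M := by
    rw [hx, Real.log_pow]
    push_cast
    ring
  have hlogM : 0 < Real.log M := Real.log_pos hM1
  have hlogM' : Real.log M ≤ M - 1 := Real.log_le_sub_one_of_pos hM0
  have hchord : x * Real.log 2 / 2 ≤ Real.log x := log_chord h2.le hx4
  have hlog2 : (0.6931471803 : ℝ) < Real.log 2 := Real.log_two_gt_d9
  have hMpow : y * M = x := by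
    rw [hy, hx, ← pow_succ]
    congr 1
    have : 1 ≤ 2 ^ (j+2) := Nat.one_le_two_pow
    omega
  rw [div_le_iff₀ ht]
  -- goal : y ≤ 3 * (M - 1) * t
  have s1 : x ≤ 3 * Real.log x := by
    have hm : x * 0.6931471803 < x * Real.log 2 := by
      exact mul_lt_mul_of_pos_left hlog2 hx0
    linarith [hchord]
  have s2 : Real.log x ≤ t * (M - 1) := by
    rw [hlogx]
    exact mul_le_mul_of_nonneg_left hlogM' ht.le
  have s3 : y ≤ x := by nlinarith [mul_nonneg hy0 (by linarith : (0:ℝ) ≤ M - 1)]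
  linarith


/-- Reflection step: from a two-sided `(A,B)` quasi-isometry `U` produce an involution `V`
with constants `(A², AB+B)` swapping `x` and `y`, controlling the midpoint defect of `U`. -/
lemma reflect {G H : Type*} [NormedAddCommGroup G] [NormedSpace ℝ G]
    [NormedAddCommGroup H] [NormedSpace ℝ H]
    (U : G → H) (hbij : Function.Bijective U) (A B : ℝ)
    (hA : 1 ≤ A) (hB : 0 ≤ B)
    (hU : ∀ a b, ‖U a - U b‖ ≤ A * ‖a - b‖ + B)
    (hUinv : ∀ u v, ‖Function.invFun U u - Function.invFun U v‖ ≤ A * ‖u - v‖ + B)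
    (x y : G) :
    ∃ V : G → G, Function.Bijective V ∧
      (∀ a b, ‖V a - V b‖ ≤ A ^ 2 * ‖a - b‖ + (A * B + B)) ∧
      (∀ u v, ‖Function.invFun V u - Function.invFun V v‖ ≤ A ^ 2 * ‖u - v‖ + (A * B + B)) ∧
      V x = y ∧ V y = x ∧
      ‖U ((2:ℝ)⁻¹ • (x + y)) - (2:ℝ)⁻¹ • (U x + U y)‖ ≤
        (A * ‖V ((2:ℝ)⁻¹ • (x + y)) - (2:ℝ)⁻¹ • (x + y)‖ + B) / 2 := by
  have hsur := hbij.surjective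
  have hinj := hbij.injective
  have hrU : ∀ b, U (Function.invFun U b) = b := fun b => Function.rightInverse_invFun hsur b
  have hlU : ∀ a, Function.invFun U (U a) = a := fun a => Function.leftInverse_invFun hinj a
  have hA0 : (0:ℝ) ≤ A := le_trans zero_le_one hA
  set V : G → G := fun a => Function.invFun U (U x + U y - U a) with hVdef
  have hVV : ∀ a, V (V a) = a := by
    intro a
    simp only [hVdef, hrU, sub_sub_cancel, hlU]
  have hVbij : Function.Bijective V := Function.bijective_iff_has_inverse.mpr ⟨V, hVV, hVV⟩
  have hVinveq : Function.invFun V = V := by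
    funext u
    apply hVbij.injective
    rw [Function.rightInverse_invFun hVbij.surjective u, hVV]
  have hVlip : ∀ a b, ‖V a - V b‖ ≤ A ^ 2 * ‖a - b‖ + (A * B + B) := by
    intro a b
    have h1 : ‖V a - V b‖ ≤ A * ‖(U x + U y - U a) - (U x + U y - U b)‖ + B := hUinv _ _
    have h2 : (U x + U y - U a) - (U x + U y - U b) = U b - U a := by abel
    rw [h2] at h1
    have h3 : ‖U b - U a‖ ≤ A * ‖b - a‖ + B := hU b a
    have h4 : ‖b - a‖ = ‖a - b‖ := norm_sub_rev b a
    rw [h4] at h3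
    nlinarith [h1, h3, norm_nonneg (U b - U a)]
  have hVx : V x = y := by
    simp only [hVdef, add_sub_cancel_left, hlU]
  have hVy : V y = x := by
    simp only [hVdef, add_sub_cancel_right, hlU]
  refine ⟨V, hVbij, hVlip, by rw [hVinveq]; exact hVlip, hVx, hVy, ?_⟩
  set c : G := (2:ℝ)⁻¹ • (x + y) with hcdef
  have hUVc : U (V c) = U x + U y - U c := hrU _
  have h6 : U (V c) - U c = (2:ℝ) • ((2:ℝ)⁻¹ • (U x + U y) - U c) := by
    rw [hUVc]
    module
  have h7 : ‖U (V c) - U c‖ = 2 * ‖U c - (2:ℝ)⁻¹ • (U x + U y)‖ := by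
    rw [h6, norm_smul, norm_sub_rev]
    norm_num
  have h8 : ‖U (V c) - U c‖ ≤ A * ‖V c - c‖ + B := hU _ _
  rw [h7] at h8
  linarith

/-- Unrolled midpoint-defect estimate for self-maps, by induction on the depth. -/
lemma lemC : ∀ (n : ℕ) {G : Type*} [NormedAddCommGroup G] [NormedSpace ℝ G]
    (U : G → G), Function.Bijective U → ∀ (A B : ℝ), 1 ≤ A → 0 ≤ B →
    (∀ a b, ‖U a - U b‖ ≤ A * ‖a - b‖ + B) →
    (∀ u v, ‖Function.invFun U u - Function.invFun U v‖ ≤ A * ‖u - v‖ + B) →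
    ∀ x y : G, ‖U ((2:ℝ)⁻¹ • (x + y)) - (2:ℝ)⁻¹ • (U x + U y)‖ ≤
      A ^ (2 ^ (n+1) - 1) * ‖x - y‖ / 2 ^ (n+1) + B * psiAux n A := by
  intro n
  induction n with
  | zero =>
    intro G _ _ U hbij A B hA hB hU hUinv x y
    set c : G := (2:ℝ)⁻¹ • (x + y) with hcdef
    have e1 : U c - (2:ℝ)⁻¹ • (U x + U y) = (2:ℝ)⁻¹ • ((U c - U x) + (U c - U y)) := by
      module
    have e2 : c - x = (2:ℝ)⁻¹ • (y - x) := by rw [hcdef]; module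
    have e3 : c - y = (2:ℝ)⁻¹ • (x - y) := by rw [hcdef]; module
    have n2 : ‖c - x‖ = 2⁻¹ * ‖x - y‖ := by
      rw [e2, norm_smul, norm_sub_rev]
      norm_num
    have n3 : ‖c - y‖ = 2⁻¹ * ‖x - y‖ := by
      rw [e3, norm_smul]
      norm_num
    have h1 : ‖U c - U x‖ ≤ A * ‖c - x‖ + B := hU _ _
    have h2 : ‖U c - U y‖ ≤ A * ‖c - y‖ + B := hU _ _
    have h3 : ‖U c - (2:ℝ)⁻¹ • (U x + U y)‖ ≤ 2⁻¹ * (‖U c - U x‖ + ‖U c - U y‖) := by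
      rw [e1, norm_smul]
      have := norm_add_le (U c - U x) (U c - U y)
      have hn : ‖((2:ℝ)⁻¹ : ℝ)‖ = 2⁻¹ := by norm_num
      rw [hn]
      nlinarith [this]
    rw [n2] at h1
    rw [n3] at h2
    simp only [psiAux, mul_one]
    have hexp : A ^ (2 ^ (0+1) - 1) = A := by norm_num
    have hden : ((2:ℝ)) ^ (0+1) = 2 := by norm_num
    rw [hexp, hden]
    linarith [h1, h2, h3]
  | succ n ih =>
    intro G _ _ U hbij A B hA hB hU hUinv x y
    obtain ⟨V, hVbij, hVlip, hVinvlip, hVx, hVy, hkey⟩ :=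
      reflect U hbij A B hA hB hU hUinv x y
    have hA0 : (0:ℝ) ≤ A := le_trans zero_le_one hA
    have hA2 : 1 ≤ A ^ 2 := one_le_pow₀ hA
    have hB2 : 0 ≤ A * B + B := by positivity
    have hC := ih V hVbij (A ^ 2) (A * B + B) hA2 hB2 hVlip hVinvlip x y
    rw [hVx, hVy, add_comm y x] at hC
    have hmono : A * ‖V ((2:ℝ)⁻¹ • (x + y)) - (2:ℝ)⁻¹ • (x + y)‖ ≤
        A * ((A ^ 2) ^ (2 ^ (n+1) - 1) * ‖x - y‖ / 2 ^ (n+1) + (A * B + B) * psiAux n (A ^ 2)) :=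
      mul_le_mul_of_nonneg_left hC hA0
    have hstep : ‖U ((2:ℝ)⁻¹ • (x + y)) - (2:ℝ)⁻¹ • (U x + U y)‖ ≤
        (A * ((A ^ 2) ^ (2 ^ (n+1) - 1) * ‖x - y‖ / 2 ^ (n+1)
          + (A * B + B) * psiAux n (A ^ 2)) + B) / 2 := by
      refine le_trans hkey ?_
      linarith
    have hMX : A * (A ^ 2) ^ (2 ^ (n+1) - 1) = A ^ (2 ^ (n+2) - 1) := by
      rw [← pow_mul, ← pow_succ']
      congr 1
      have h1 : 1 ≤ 2 ^ (n+1) := Nat.one_le_two_pow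
      have h2 : 2 ^ (n+2) = 2 * 2 ^ (n+1) := by rw [Nat.pow_succ, Nat.mul_comm]
      omega
    have halg : (A * ((A ^ 2) ^ (2 ^ (n+1) - 1) * ‖x - y‖ / 2 ^ (n+1)
          + (A * B + B) * psiAux n (A ^ 2)) + B) / 2
        = A ^ (2 ^ (n+2) - 1) * ‖x - y‖ / 2 ^ (n+2) + B * psiAux (n+1) A := by
      rw [← hMX]
      simp only [psiAux]
      rw [show ((2:ℝ)) ^ (n+2) = 2 * 2 ^ (n+1) from by ring]
      have hne : ((2:ℝ)) ^ (n+1) ≠ 0 := by positivity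
      field_simp
      ring
    rw [halg] at hstep
    exact hstep

theorem midpoint_estimate_bounded_functions
    {E F : Type*} [NormedAddCommGroup E] [NormedSpace ℝ E]
    [NormedAddCommGroup F] [NormedSpace ℝ F]
    (M L : ℝ) (hM1 : 1 < M) (hM2 : M < 1.2) (hL : 0 ≤ L)
    (T : E → F) (hbij : Function.Bijective T)
    (hT : ∀ x y : E, ‖T x - T y‖ ≤ M * ‖x - y‖ + L)
    (hTinv : ∀ u v : F, ‖Function.invFun T u - Function.invFun T v‖ ≤ M * ‖u - v‖ + L)
    (m : ℝ) (f g : E) (hf : ‖f‖ ≤ m) (hg : ‖g‖ ≤ m) :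
    ‖T ((2:ℝ)⁻¹ • (f + g)) - (2:ℝ)⁻¹ • (T f + T g)‖ ≤ 3 * (M - 1) * (2 * m) + (4 / (M - 1)) * L ∧
    3 * (M - 1) * (2 * m) + (4 / (M - 1)) * L ≤ 6 * (M - 1) * m + (4 / (M - 1)) * L := by
  have hε : (0:ℝ) < M - 1 := by linarith
  refine ⟨?_, le_of_eq (by ring)⟩
  classical
  have hex : ∃ k : ℕ, 2 < M ^ (2 ^ k) := by
    obtain ⟨k, hk⟩ := pow_unbounded_of_one_lt (2:ℝ) hM1
    exact ⟨k, lt_of_lt_of_le hk (pow_le_pow_right₀ hM1.le (Nat.lt_two_pow_self (n := k)).le)⟩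
  have hk₀ := Nat.find_spec hex
  have hM12 : M < 2 := by linarith [show (1.2:ℝ) < 2 by norm_num]
  have hk2 : 2 ≤ Nat.find hex := by
    by_contra hc
    push_neg at hc
    have h01 : Nat.find hex = 0 ∨ Nat.find hex = 1 := by omega
    rcases h01 with h | h <;> rw [h] at hk₀
    · simp only [pow_zero, pow_one] at hk₀
      linarith
    · have he1 : M ^ (2 ^ 1) = M * M := by norm_num [sq, pow_succ]
      rw [he1] at hk₀
      nlinarith
  set n₀ := Nat.find hex - 2 with hn₀
  have hA2 : M ^ (2 ^ (n₀+1)) ≤ 2 := by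
    have := Nat.find_min hex (m := n₀ + 1) (by omega)
    exact not_lt.mp this
  have hB2 : 2 < M ^ (2 ^ (n₀+2)) := by
    have he : n₀ + 2 = Nat.find hex := by omega
    rw [he]
    exact hk₀
  obtain ⟨V, hVbij, hVlip, hVinvlip, hVf, hVg, hkey⟩ :=
    reflect T hbij M L hM1.le hL hT hTinv f g
  have hM0 : (0:ℝ) ≤ M := by linarith
  have hM2sq : 1 ≤ M ^ 2 := one_le_pow₀ hM1.le
  have hBnn : 0 ≤ M * L + L := by positivity
  have hC := lemC n₀ V hVbij (M ^ 2) (M * L + L) hM2sq hBnn hVlip hVinvlip f g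
  rw [hVf, hVg, add_comm g f] at hC
  set d := ‖f - g‖ with hd_def
  have hd : d ≤ 2 * m := by
    calc d ≤ ‖f‖ + ‖g‖ := norm_sub_le f g
      _ ≤ 2 * m := by linarith
  have hd0 : 0 ≤ d := norm_nonneg _
  have hδ : ‖T ((2:ℝ)⁻¹ • (f + g)) - (2:ℝ)⁻¹ • (T f + T g)‖ ≤
      (M * ((M ^ 2) ^ (2 ^ (n₀+1) - 1) * d / 2 ^ (n₀+1)
        + (M * L + L) * psiAux n₀ (M ^ 2)) + L) / 2 := by
    refine le_trans hkey ?_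
    have := mul_le_mul_of_nonneg_left hC hM0
    linarith
  have hMX : M * (M ^ 2) ^ (2 ^ (n₀+1) - 1) = M ^ (2 ^ (n₀+2) - 1) := by
    rw [← pow_mul, ← pow_succ']
    congr 1
    have h1 : 1 ≤ 2 ^ (n₀+1) := Nat.one_le_two_pow
    have h2 : 2 ^ (n₀+2) = 2 * 2 ^ (n₀+1) := by rw [Nat.pow_succ, Nat.mul_comm]
    omega
  have halg : (M * ((M ^ 2) ^ (2 ^ (n₀+1) - 1) * d / 2 ^ (n₀+1)
        + (M * L + L) * psiAux n₀ (M ^ 2)) + L) / 2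
      = M ^ (2 ^ (n₀+2) - 1) * d / 2 ^ (n₀+2) + L * psiAux (n₀+1) M := by
    rw [← hMX]
    simp only [psiAux]
    rw [show ((2:ℝ)) ^ (n₀+2) = 2 * 2 ^ (n₀+1) from by ring]
    have hne : ((2:ℝ)) ^ (n₀+1) ≠ 0 := by positivity
    field_simp
    ring
  rw [halg] at hδ
  have hcoef := coeff_bound M n₀ hM1 hA2 hB2
  have hψ := psi_le (n₀+1) M hM1 hA2
  have hψ' : L * psiAux (n₀+1) M ≤ 4 / (M - 1) * L := by
    have hq : psiAux (n₀+1) M ≤ 4 / (M - 1) := by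
      rw [le_div_iff₀ hε]
      linarith
    calc L * psiAux (n₀+1) M ≤ L * (4 / (M - 1)) := mul_le_mul_of_nonneg_left hq hL
      _ = 4 / (M - 1) * L := by ring
  have hterm1 : M ^ (2 ^ (n₀+2) - 1) * d / 2 ^ (n₀+2) ≤ 3 * (M - 1) * (2 * m) := by
    have hre : M ^ (2 ^ (n₀+2) - 1) * d / 2 ^ (n₀+2)
        = (M ^ (2 ^ (n₀+2) - 1) / 2 ^ (n₀+2)) * d := by ring
    rw [hre]
    exact mul_le_mul hcoef hd hd0 (by linarith)
  linarith [hδ, hterm1, hψ']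
end
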